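/- For any type τ, suppose ⟨⟨a⟩⟩v and ⟨⟨a'⟩⟩v' are closed atom-binding values with atom(a,v,a',v') ⊆ w, ∅ ⊢ ⟨⟨a⟩⟩v : τ bnd and ∅ ⊢ ⟨⟨a'⟩⟩v' : τ bnd. If for some atom a'' ∉ w one has ⊢_{w∪{a''}} v[a:=a''] ≅ v'[a':=a''] : τ, then ⊢_w ⟨⟨a⟩⟩v ≅ ⟨⟨a'⟩⟩v' : τ bnd. -/

import Mathlib

set_option autoImplicit true

/-! ## Atoms and variables -/

abbrev Atom : Type := ℕ

/-! ## Types over a set of data type symbols -/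

inductive Ty (D : Type) : Type where
  | unit : Ty D
  | prod : Ty D → Ty D → Ty D
  | arrow : Ty D → Ty D → Ty D
  | data : D → Ty D
  | atm : Ty D
  | bnd : Ty D → Ty D

/-! ## Signatures: data types, constructors and observations -/

structure Sig : Type 1 where
  D : Type
  C : Type
  O : Type
  [finD : Fintype D]
  [finC : Fintype C]
  [finO : Fintype O]
  natD : D
  argTy : C → Ty D
  resTy : C → D
  zeroC : C
  succC : C
  zeroArg : argTy zeroC = Ty.unit
  zeroRes : resTy zeroC = natD
  succArg : argTy succC = Ty.data natD
  succRes : resTy succC = natD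
  arity : O → ℕ
  obsVal : O → List Atom → List Atom → ℕ
  eqO : O
  eqArity : arity eqO = 2
  eqSem : ∀ (s : List Atom) (a b : Atom),
    obsVal eqO s [a, b] = if a = b then 0 else 1

attribute [instance] Sig.finD Sig.finC Sig.finO

/-! ## Terms (de Bruijn representation; values are a sub-grammar cut out by `IsVal`) -/

inductive Tm (σ : Sig) : Type where
  | var : ℕ → Tm σ
  | unit : Tm σ
  | pair : Tm σ → Tm σ → Tm σ
  | fn : Tm σ → Tm σ          -- fun(f x = e); de Bruijn: var 0 = x, var 1 = f
  | con : σ.C → Tm σ → Tm σ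
  | atom : Atom → Tm σ
  | bindv : Tm σ → Tm σ → Tm σ -- atom binding ⟨⟨v₁⟩⟩v₂
  | lett : Tm σ → Tm σ → Tm σ  -- let x = e₁ in e₂; binds var 0 in e₂
  | fst : Tm σ → Tm σ
  | snd : Tm σ → Tm σ
  | app : Tm σ → Tm σ → Tm σ
  | case : Tm σ → (σ.C → Tm σ) → Tm σ -- match; each branch binds var 0
  | fresh : Tm σ
  | unbind : Tm σ → Tm σ
  | obs : (o : σ.O) → (Fin (σ.arity o) → Tm σ) → Tm σ

inductive IsVal {σ : Sig} : Tm σ → Prop where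
  | var : IsVal (Tm.var n)
  | unit : IsVal Tm.unit
  | pair : IsVal v₁ → IsVal v₂ → IsVal (Tm.pair v₁ v₂)
  | fn : IsVal (Tm.fn e)
  | con : IsVal v → IsVal (Tm.con c v)
  | atom : IsVal (Tm.atom a)
  | bindv : IsVal v₁ → IsVal v₂ → IsVal (Tm.bindv v₁ v₂)

/-! ## Renaming and substitution of variables -/

def upr (r : ℕ → ℕ) : ℕ → ℕ
  | 0 => 0
  | n + 1 => r n + 1

namespace Tm

variable {σ : Sig}

def renV : Tm σ → (ℕ → ℕ) → Tm σ
  | .var n, r => .var (r n)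
  | .unit, _ => .unit
  | .pair t₁ t₂, r => .pair (renV t₁ r) (renV t₂ r)
  | .fn e, r => .fn (renV e (upr (upr r)))
  | .con c t, r => .con c (renV t r)
  | .atom a, _ => .atom a
  | .bindv t₁ t₂, r => .bindv (renV t₁ r) (renV t₂ r)
  | .lett e₁ e₂, r => .lett (renV e₁ r) (renV e₂ (upr r))
  | .fst t, r => .fst (renV t r)
  | .snd t, r => .snd (renV t r)
  | .app t₁ t₂, r => .app (renV t₁ r) (renV t₂ r)
  | .case t br, r => .case (renV t r) (fun c => renV (br c) (upr r))
  | .fresh, _ => .fresh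
  | .unbind t, r => .unbind (renV t r)
  | .obs o args, r => .obs o (fun i => renV (args i) r)

def ups (ρ : ℕ → Tm σ) : ℕ → Tm σ
  | 0 => .var 0
  | n + 1 => renV (ρ n) Nat.succ

def subst : Tm σ → (ℕ → Tm σ) → Tm σ
  | .var n, ρ => ρ n
  | .unit, _ => .unit
  | .pair t₁ t₂, ρ => .pair (subst t₁ ρ) (subst t₂ ρ)
  | .fn e, ρ => .fn (subst e (ups (ups ρ)))
  | .con c t, ρ => .con c (subst t ρ)
  | .atom a, _ => .atom a
  | .bindv t₁ t₂, ρ => .bindv (subst t₁ ρ) (subst t₂ ρ)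
  | .lett e₁ e₂, ρ => .lett (subst e₁ ρ) (subst e₂ (ups ρ))
  | .fst t, ρ => .fst (subst t ρ)
  | .snd t, ρ => .snd (subst t ρ)
  | .app t₁ t₂, ρ => .app (subst t₁ ρ) (subst t₂ ρ)
  | .case t br, ρ => .case (subst t ρ) (fun c => subst (br c) (ups ρ))
  | .fresh, _ => .fresh
  | .unbind t, ρ => .unbind (subst t ρ)
  | .obs o args, ρ => .obs o (fun i => subst (args i) ρ)

/-- The substitution [v/x₀]. -/
def cons1 (v : Tm σ) : ℕ → Tm σ
  | 0 => v
  | n + 1 => .var n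

/-- The substitution [v/x₀, f/x₁]. -/
def cons2 (v f : Tm σ) : ℕ → Tm σ
  | 0 => v
  | 1 => f
  | n + 2 => .var n

/-- e[v/x] (single capture-avoiding substitution for the last-bound variable). -/
def subst1 (e v : Tm σ) : Tm σ := subst e (cons1 v)

/-- e[v/x, f/f'] (used for function application). -/
def subst2 (e v f : Tm σ) : Tm σ := subst e (cons2 v f)

/-! ## Atoms of a term, renaming/permuting atoms, observation symbols -/

def atoms : Tm σ → Finset Atom
  | .var _ => ∅
  | .unit => ∅
  | .pair t₁ t₂ => atoms t₁ ∪ atoms t₂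
  | .fn e => atoms e
  | .con _ t => atoms t
  | .atom a => {a}
  | .bindv t₁ t₂ => atoms t₁ ∪ atoms t₂
  | .lett e₁ e₂ => atoms e₁ ∪ atoms e₂
  | .fst t => atoms t
  | .snd t => atoms t
  | .app t₁ t₂ => atoms t₁ ∪ atoms t₂
  | .case t br => atoms t ∪ Finset.univ.biUnion (fun c => atoms (br c))
  | .fresh => ∅
  | .unbind t => atoms t
  | .obs _ args => Finset.univ.biUnion (fun i => atoms (args i))

def mapAtoms : Tm σ → (Atom → Atom) → Tm σ
  | .var n, _ => .var n
  | .unit, _ => .unit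
  | .pair t₁ t₂, f => .pair (mapAtoms t₁ f) (mapAtoms t₂ f)
  | .fn e, f => .fn (mapAtoms e f)
  | .con c t, f => .con c (mapAtoms t f)
  | .atom a, f => .atom (f a)
  | .bindv t₁ t₂, f => .bindv (mapAtoms t₁ f) (mapAtoms t₂ f)
  | .lett e₁ e₂, f => .lett (mapAtoms e₁ f) (mapAtoms e₂ f)
  | .fst t, f => .fst (mapAtoms t f)
  | .snd t, f => .snd (mapAtoms t f)
  | .app t₁ t₂, f => .app (mapAtoms t₁ f) (mapAtoms t₂ f)
  | .case t br, f => .case (mapAtoms t f) (fun c => mapAtoms (br c) f)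
  | .fresh, _ => .fresh
  | .unbind t, f => .unbind (mapAtoms t f)
  | .obs o args, f => .obs o (fun i => mapAtoms (args i) f)

/-- v[a := a'] : rename all occurrences of atom a to a'. -/
def renameAtom (t : Tm σ) (a a' : Atom) : Tm σ :=
  t.mapAtoms (fun b => if b = a then a' else b)

def obsSyms : Tm σ → Set σ.O
  | .var _ => ∅
  | .unit => ∅
  | .pair t₁ t₂ => obsSyms t₁ ∪ obsSyms t₂
  | .fn e => obsSyms e
  | .con _ t => obsSyms t
  | .atom _ => ∅
  | .bindv t₁ t₂ => obsSyms t₁ ∪ obsSyms t₂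
  | .lett e₁ e₂ => obsSyms e₁ ∪ obsSyms e₂
  | .fst t => obsSyms t
  | .snd t => obsSyms t
  | .app t₁ t₂ => obsSyms t₁ ∪ obsSyms t₂
  | .case t br => obsSyms t ∪ ⋃ c, obsSyms (br c)
  | .fresh => ∅
  | .unbind t => obsSyms t
  | .obs o args => insert o (⋃ i, obsSyms (args i))

end Tm

/-! ## Frame stacks -/

inductive Stk (σ : Sig) : Type where
  | id : Stk σ
  | cons : Stk σ → Tm σ → Stk σ  -- S∘(x.e); e binds var 0

namespace Stk

variable {σ : Sig}

def atoms : Stk σ → Finset Atom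
  | .id => ∅
  | .cons S e => atoms S ∪ e.atoms

def obsSyms : Stk σ → Set σ.O
  | .id => ∅
  | .cons S e => obsSyms S ∪ e.obsSyms

def mapAtoms : Stk σ → (Atom → Atom) → Stk σ
  | .id, _ => .id
  | .cons S e, f => .cons (mapAtoms S f) (e.mapAtoms f)

/-- S[e]: Id[e] = e, (S∘(x.e'))[e] = S[let x = e in e']. -/
def fill : Stk σ → Tm σ → Tm σ
  | .id, e => e
  | .cons S e', e => fill S (Tm.lett e e')

end Stk

/-! ## Numerals -/

def numeral (σ : Sig) : ℕ → Tm σ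
  | 0 => Tm.con σ.zeroC Tm.unit
  | n + 1 => Tm.con σ.succC (numeral σ n)

/-! ## Configurations -/

structure Config (σ : Sig) : Type where
  st : List Atom
  stk : Stk σ
  tm : Tm σ

/-! ## Typing -/

inductive HasTy (σ : Sig) : List (Ty σ.D) → Tm σ → Ty σ.D → Prop where
  | var (Γ : List (Ty σ.D)) (n : ℕ) (τ : Ty σ.D) :
      Γ[n]? = some τ → HasTy σ Γ (Tm.var n) τ
  | unit : HasTy σ Γ Tm.unit Ty.unit
  | pair : IsVal v₁ → IsVal v₂ → HasTy σ Γ v₁ τ₁ → HasTy σ Γ v₂ τ₂ →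
      HasTy σ Γ (Tm.pair v₁ v₂) (Ty.prod τ₁ τ₂)
  | fn : HasTy σ (τ :: Ty.arrow τ τ' :: Γ) e τ' →
      HasTy σ Γ (Tm.fn e) (Ty.arrow τ τ')
  | con : IsVal v → HasTy σ Γ v (σ.argTy c) →
      HasTy σ Γ (Tm.con c v) (Ty.data (σ.resTy c))
  | atom : HasTy σ Γ (Tm.atom a) Ty.atm
  | bindv : IsVal v₁ → IsVal v₂ → HasTy σ Γ v₁ Ty.atm → HasTy σ Γ v₂ τ →
      HasTy σ Γ (Tm.bindv v₁ v₂) (Ty.bnd τ)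
  | lett : HasTy σ Γ e₁ τ → HasTy σ (τ :: Γ) e₂ τ' →
      HasTy σ Γ (Tm.lett e₁ e₂) τ'
  | fst : IsVal v → HasTy σ Γ v (Ty.prod τ₁ τ₂) → HasTy σ Γ (Tm.fst v) τ₁
  | snd : IsVal v → HasTy σ Γ v (Ty.prod τ₁ τ₂) → HasTy σ Γ (Tm.snd v) τ₂
  | app : IsVal v₁ → IsVal v₂ → HasTy σ Γ v₁ (Ty.arrow τ τ') → HasTy σ Γ v₂ τ →
      HasTy σ Γ (Tm.app v₁ v₂) τ'
  | case (br : σ.C → Tm σ) : IsVal v → HasTy σ Γ v (Ty.data δ) →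
      (∀ c, σ.resTy c = δ → HasTy σ (σ.argTy c :: Γ) (br c) τ) →
      HasTy σ Γ (Tm.case v br) τ
  | fresh : HasTy σ Γ Tm.fresh Ty.atm
  | unbind : IsVal v → HasTy σ Γ v (Ty.bnd τ) →
      HasTy σ Γ (Tm.unbind v) (Ty.prod Ty.atm τ)
  | obs (o : σ.O) (args : Fin (σ.arity o) → Tm σ) :
      (∀ i, IsVal (args i)) → (∀ i, HasTy σ Γ (args i) Ty.atm) →
      HasTy σ Γ (Tm.obs o args) (Ty.data σ.natD)

inductive HasTyStk (σ : Sig) : List (Ty σ.D) → Stk σ → Ty σ.D → Ty σ.D → Prop where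
  | id : HasTyStk σ Γ Stk.id τ τ
  | cons : HasTy σ (τ :: Γ) e τ' → HasTyStk σ Γ S τ' τ'' →
      HasTyStk σ Γ (Stk.cons S e) τ τ''

/-! ## The transition relation -/

inductive Step (σ : Sig) : Config σ → Config σ → Prop where
  | pop : IsVal v →
      Step σ ⟨s, Stk.cons S e, v⟩ ⟨s, S, e.subst1 v⟩
  | lett :
      Step σ ⟨s, S, Tm.lett e₁ e₂⟩ ⟨s, Stk.cons S e₂, e₁⟩
  | case (br : σ.C → Tm σ) : IsVal v →
      Step σ ⟨s, S, Tm.case (Tm.con c v) br⟩ ⟨s, S, (br c).subst1 v⟩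
  | fst : IsVal v₁ → IsVal v₂ →
      Step σ ⟨s, S, Tm.fst (Tm.pair v₁ v₂)⟩ ⟨s, S, v₁⟩
  | snd : IsVal v₁ → IsVal v₂ →
      Step σ ⟨s, S, Tm.snd (Tm.pair v₁ v₂)⟩ ⟨s, S, v₂⟩
  | app : IsVal v →
      Step σ ⟨s, S, Tm.app (Tm.fn e) v⟩ ⟨s, S, e.subst2 v (Tm.fn e)⟩
  | fresh : a' ∉ s →
      Step σ ⟨s, S, Tm.fresh⟩ ⟨s ++ [a'], S, Tm.atom a'⟩
  | unbind : a' ∉ s → IsVal v →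
      Step σ ⟨s, S, Tm.unbind (Tm.bindv (Tm.atom a) v)⟩
             ⟨s ++ [a'], S, Tm.pair (Tm.atom a') (v.renameAtom a a')⟩
  | obs (o : σ.O) (as : Fin (σ.arity o) → Atom) :
      (∀ i, as i ∈ s) →
      Step σ ⟨s, S, Tm.obs o (fun i => Tm.atom (as i))⟩
             ⟨s, S, numeral σ (σ.obsVal o s (List.ofFn as))⟩

/-! ## Termination -/

inductive TermN (σ : Sig) : Config σ → ℕ → Prop where
  | val : IsVal v → TermN σ ⟨s, Stk.id, v⟩ 0
  | step : Step σ c c' → TermN σ c' n → TermN σ c (n + 1)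

def Term (σ : Sig) (c : Config σ) : Prop := ∃ n, TermN σ c n

/-! ## Equivariance and affineness of observations -/

def ObsEquivariant (σ : Sig) : Prop :=
  ∀ (π : Equiv.Perm Atom), {a : Atom | π a ≠ a}.Finite →
    ∀ (o : σ.O) (s as : List Atom),
      s.Nodup → as.length = σ.arity o → (∀ a ∈ as, a ∈ s) →
      σ.obsVal o s as = σ.obsVal o (s.map ⇑π) (as.map ⇑π)

def AffineObs (σ : Sig) (o : σ.O) : Prop :=
  ∀ (s : List Atom) (a' : Atom) (as : List Atom),
    s.Nodup → a' ∉ s → as.length = σ.arity o → (∀ a ∈ as, a ∈ s) →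
    σ.obsVal o (a' :: s) as = σ.obsVal o s as

/-! ## Operational equivalence of closed expressions, and contextual equivalence -/

def OpEq (σ : Sig) (w : Finset Atom) (e e' : Tm σ) (τ : Ty σ.D) : Prop :=
  e.atoms ∪ e'.atoms ⊆ w ∧ HasTy σ [] e τ ∧ HasTy σ [] e' τ ∧
  ∀ (s : List Atom) (S : Stk σ) (τ' : Ty σ.D),
    s.Nodup → w ∪ S.atoms ⊆ s.toFinset → HasTyStk σ [] S τ τ' →
    (Term σ ⟨s, S, e⟩ ↔ Term σ ⟨s, S, e'⟩)

/-- A closing substitution for context Γ with atoms in w. -/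
def ClosingSubst (σ : Sig) (Γ : List (Ty σ.D)) (w : Finset Atom) (vs : ℕ → Tm σ) : Prop :=
  ∀ i τ, Γ[i]? = some τ → IsVal (vs i) ∧ HasTy σ [] (vs i) τ ∧ (vs i).atoms ⊆ w

def CtxEq (σ : Sig) (Γ : List (Ty σ.D)) (w : Finset Atom) (e e' : Tm σ) (τ : Ty σ.D) : Prop :=
  e.atoms ∪ e'.atoms ⊆ w ∧ HasTy σ Γ e τ ∧ HasTy σ Γ e' τ ∧
  ∀ (w' : Finset Atom) (vs : ℕ → Tm σ), w ⊆ w' → ClosingSubst σ Γ w' vs →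
    OpEq σ w' (e.subst vs) (e'.subst vs) τ

/-! ## Expression relations -/

def ExprRel (σ : Sig) : Type :=
  List (Ty σ.D) → Finset Atom → Tm σ → Tm σ → Ty σ.D → Prop

def IsExprRel (σ : Sig) (R : ExprRel σ) : Prop :=
  ∀ Γ w e e' τ, R Γ w e e' τ →
    e.atoms ∪ e'.atoms ⊆ w ∧ HasTy σ Γ e τ ∧ HasTy σ Γ e' τ

/-- Compatible refinement ℰ̂ of an expression relation ℰ. -/
inductive CompRef (σ : Sig) (R : ExprRel σ) :
    List (Ty σ.D) → Finset Atom → Tm σ → Tm σ → Ty σ.D → Prop where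
  | var (Γ : List (Ty σ.D)) (n : ℕ) (τ : Ty σ.D) :
      Γ[n]? = some τ → CompRef σ R Γ w (Tm.var n) (Tm.var n) τ
  | unit : CompRef σ R Γ w Tm.unit Tm.unit Ty.unit
  | pair : IsVal v₁ → IsVal v₂ → IsVal v₁' → IsVal v₂' →
      R Γ w v₁ v₁' τ₁ → R Γ w v₂ v₂' τ₂ →
      CompRef σ R Γ w (Tm.pair v₁ v₂) (Tm.pair v₁' v₂') (Ty.prod τ₁ τ₂)
  | fn : R (τ :: Ty.arrow τ τ' :: Γ) w e e' τ' →
      CompRef σ R Γ w (Tm.fn e) (Tm.fn e') (Ty.arrow τ τ')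
  | con : IsVal v → IsVal v' → R Γ w v v' (σ.argTy c) →
      CompRef σ R Γ w (Tm.con c v) (Tm.con c v') (Ty.data (σ.resTy c))
  | atom : a ∈ w → CompRef σ R Γ w (Tm.atom a) (Tm.atom a) Ty.atm
  | bindv : IsVal v₁ → IsVal v₂ → IsVal v₁' → IsVal v₂' →
      R Γ w v₁ v₁' Ty.atm → R Γ w v₂ v₂' τ →
      CompRef σ R Γ w (Tm.bindv v₁ v₂) (Tm.bindv v₁' v₂') (Ty.bnd τ)
  | lett : R Γ w e₁ e₁' τ → R (τ :: Γ) w e₂ e₂' τ' →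
      CompRef σ R Γ w (Tm.lett e₁ e₂) (Tm.lett e₁' e₂') τ'
  | fst : IsVal v → IsVal v' → R Γ w v v' (Ty.prod τ₁ τ₂) →
      CompRef σ R Γ w (Tm.fst v) (Tm.fst v') τ₁
  | snd : IsVal v → IsVal v' → R Γ w v v' (Ty.prod τ₁ τ₂) →
      CompRef σ R Γ w (Tm.snd v) (Tm.snd v') τ₂
  | app : IsVal v₁ → IsVal v₂ → IsVal v₁' → IsVal v₂' →
      R Γ w v₁ v₁' (Ty.arrow τ τ') → R Γ w v₂ v₂' τ →
      CompRef σ R Γ w (Tm.app v₁ v₂) (Tm.app v₁' v₂') τ'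
  | case (br br' : σ.C → Tm σ) : IsVal v → IsVal v' → R Γ w v v' (Ty.data δ) →
      (∀ c, σ.resTy c = δ → R (σ.argTy c :: Γ) w (br c) (br' c) τ) →
      CompRef σ R Γ w (Tm.case v br) (Tm.case v' br') τ
  | fresh : CompRef σ R Γ w Tm.fresh Tm.fresh Ty.atm
  | unbind : IsVal v → IsVal v' → R Γ w v v' (Ty.bnd τ) →
      CompRef σ R Γ w (Tm.unbind v) (Tm.unbind v') (Ty.prod Ty.atm τ)
  | obs (o : σ.O) (args args' : Fin (σ.arity o) → Tm σ) :
      (∀ i, IsVal (args i)) → (∀ i, IsVal (args' i)) →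
      (∀ i, R Γ w (args i) (args' i) Ty.atm) →
      CompRef σ R Γ w (Tm.obs o args) (Tm.obs o args') (Ty.data σ.natD)

/-- Compatible refinement extended to frame stacks. -/
inductive StkRef (σ : Sig) (R : ExprRel σ) :
    List (Ty σ.D) → Finset Atom → Stk σ → Stk σ → Ty σ.D → Ty σ.D → Prop where
  | id : StkRef σ R Γ w Stk.id Stk.id τ τ
  | cons : R (τ :: Γ) w e e' τ' → StkRef σ R Γ w S S' τ' τ'' →
      StkRef σ R Γ w (Stk.cons S e) (Stk.cons S' e') τ τ''

/-! ## Properties of expression relations -/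

def RelRefl (σ : Sig) (R : ExprRel σ) : Prop :=
  ∀ Γ w (e : Tm σ) τ, e.atoms ⊆ w → HasTy σ Γ e τ → R Γ w e e τ

def RelSymm (σ : Sig) (R : ExprRel σ) : Prop :=
  ∀ Γ w e e' τ, R Γ w e e' τ → R Γ w e' e τ

def RelTrans (σ : Sig) (R : ExprRel σ) : Prop :=
  ∀ Γ w e e' e'' τ, R Γ w e e' τ → R Γ w e' e'' τ → R Γ w e e'' τ

def RelCompat (σ : Sig) (R : ExprRel σ) : Prop :=
  ∀ Γ w e e' τ, CompRef σ R Γ w e e' τ → R Γ w e e' τ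

def RelSubst (σ : Sig) (R : ExprRel σ) : Prop :=
  ∀ Γ w (v v' : Tm σ) τ e e' τ', IsVal v → IsVal v' →
    R Γ w v v' τ → R (τ :: Γ) w e e' τ' →
    R Γ w (e.subst1 v) (e'.subst1 v') τ'

def RelEquivariant (σ : Sig) (R : ExprRel σ) : Prop :=
  ∀ (π : Equiv.Perm Atom), {a : Atom | π a ≠ a}.Finite →
    ∀ Γ w (e e' : Tm σ) τ, R Γ w e e' τ →
      R Γ (w.image ⇑π) (e.mapAtoms ⇑π) (e'.mapAtoms ⇑π) τ

def RelAdequate (σ : Sig) (R : ExprRel σ) : Prop :=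
  ∀ w e e' τ, R [] w e e' τ → OpEq σ w e e' τ

/-! ## The Howe relation (least relation closed under the Howe rule) -/

def Howe (σ : Sig) : ExprRel σ := fun Γ w e e'' τ =>
  ∀ R : ExprRel σ,
    (∀ Γ' w' a c τ',
      (∃ b, CompRef σ R Γ' w' a b τ' ∧ CtxEq σ Γ' w' b c τ') → R Γ' w' a c τ') →
    R Γ w e e'' τ

/-! ## Nominal arities and α-equivalence -/

inductive NominalArity (σ : Sig) : Ty σ.D → Prop where
  | unit : NominalArity σ Ty.unit
  | prod : NominalArity σ t₁ → NominalArity σ t₂ → NominalArity σ (Ty.prod t₁ t₂)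
  | data (d : σ.D) : NominalArity σ (Ty.data d)
  | atm : NominalArity σ Ty.atm
  | bnd : NominalArity σ t → NominalArity σ (Ty.bnd t)

inductive AlphaEq (σ : Sig) : Finset Atom → Tm σ → Tm σ → Ty σ.D → Prop where
  | unit : AlphaEq σ w Tm.unit Tm.unit Ty.unit
  | pair : AlphaEq σ w v₁ v₁' a₁ → AlphaEq σ w v₂ v₂' a₂ →
      AlphaEq σ w (Tm.pair v₁ v₂) (Tm.pair v₁' v₂') (Ty.prod a₁ a₂)
  | con : AlphaEq σ w v v' (σ.argTy c) →
      AlphaEq σ w (Tm.con c v) (Tm.con c v') (Ty.data (σ.resTy c))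
  | atom : a ∈ w → AlphaEq σ w (Tm.atom a) (Tm.atom a) Ty.atm
  | bindv (a a' a'' : Atom) (v v' : Tm σ) : a'' ∉ w →
      insert a (insert a' (v.atoms ∪ v'.atoms)) ⊆ w →
      AlphaEq σ (insert a'' w) (v.renameAtom a a'') (v'.renameAtom a' a'') ar →
      AlphaEq σ w (Tm.bindv (Tm.atom a) v) (Tm.bindv (Tm.atom a') v') (Ty.bnd ar)

/-! ## Well-typed configurations -/

def ConfigTy (σ : Sig) (w : Finset Atom) (c : Config σ) (τ : Ty σ.D) : Prop :=
  c.st.Nodup ∧ c.stk.atoms ∪ c.tm.atoms ⊆ c.st.toFinset ∧ c.st.toFinset = w ∧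
  ∃ τ', HasTyStk σ [] c.stk τ' τ ∧ HasTy σ [] c.tm τ'

/-! ### Development: syntax lemmas -/

namespace Tm

variable {σ : Sig}

theorem mapAtoms_comp (t : Tm σ) (f g : Atom → Atom) :
    (t.mapAtoms f).mapAtoms g = t.mapAtoms (g ∘ f) := by
  induction t <;> simp_all [mapAtoms]

theorem mapAtoms_congr (t : Tm σ) (f g : Atom → Atom)
    (h : ∀ a ∈ t.atoms, f a = g a) : t.mapAtoms f = t.mapAtoms g := by
  induction t with
  | var => rfl
  | unit => rfl
  | pair t₁ t₂ ih₁ ih₂ =>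
      simp only [atoms, Finset.mem_union] at h
      simp [mapAtoms, ih₁ (fun a ha => h a (Or.inl ha)), ih₂ (fun a ha => h a (Or.inr ha))]
  | fn e ih => simp only [atoms] at h; simp [mapAtoms, ih h]
  | con c t ih => simp only [atoms] at h; simp [mapAtoms, ih h]
  | atom a => simp only [atoms, Finset.mem_singleton] at h; simp [mapAtoms, h a rfl]
  | bindv t₁ t₂ ih₁ ih₂ =>
      simp only [atoms, Finset.mem_union] at h
      simp [mapAtoms, ih₁ (fun a ha => h a (Or.inl ha)), ih₂ (fun a ha => h a (Or.inr ha))]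
  | lett t₁ t₂ ih₁ ih₂ =>
      simp only [atoms, Finset.mem_union] at h
      simp [mapAtoms, ih₁ (fun a ha => h a (Or.inl ha)), ih₂ (fun a ha => h a (Or.inr ha))]
  | fst t ih => simp only [atoms] at h; simp [mapAtoms, ih h]
  | snd t ih => simp only [atoms] at h; simp [mapAtoms, ih h]
  | app t₁ t₂ ih₁ ih₂ =>
      simp only [atoms, Finset.mem_union] at h
      simp [mapAtoms, ih₁ (fun a ha => h a (Or.inl ha)), ih₂ (fun a ha => h a (Or.inr ha))]
  | case t br ih ihbr =>
      simp only [atoms, Finset.mem_union, Finset.mem_biUnion] at h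
      simp only [mapAtoms]
      rw [ih (fun a ha => h a (Or.inl ha))]
      congr 1
      funext c
      exact ihbr c (fun a ha => h a (Or.inr ⟨c, Finset.mem_univ c, ha⟩))
  | fresh => rfl
  | unbind t ih => simp only [atoms] at h; simp [mapAtoms, ih h]
  | obs o args ih =>
      simp only [atoms, Finset.mem_biUnion] at h
      simp only [mapAtoms]
      congr 1
      funext i
      exact ih i (fun a ha => h a ⟨i, Finset.mem_univ i, ha⟩)

theorem mapAtoms_id (t : Tm σ) : t.mapAtoms id = t := by
  induction t <;> simp_all [mapAtoms]

theorem atoms_mapAtoms (t : Tm σ) (f : Atom → Atom) :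
    (t.mapAtoms f).atoms = t.atoms.image f := by
  induction t with
  | case t br ih ihbr =>
      simp [mapAtoms, atoms, ih, Finset.image_union, Finset.image_biUnion]
      congr 1
      ext a
      simp only [Finset.mem_biUnion, Finset.mem_univ, true_and, ihbr, Finset.mem_image]
      aesop
  | obs o args ih =>
      simp only [mapAtoms, atoms]
      ext a
      simp only [Finset.mem_biUnion, Finset.mem_univ, true_and, ih, Finset.mem_image]
      aesop
  | _ => simp_all [mapAtoms, atoms, Finset.image_union]

theorem isVal_mapAtoms {t : Tm σ} (h : IsVal t) (f : Atom → Atom) :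
    IsVal (t.mapAtoms f) := by
  induction h with
  | var => exact IsVal.var
  | unit => exact IsVal.unit
  | pair _ _ ih₁ ih₂ => exact IsVal.pair ih₁ ih₂
  | fn => exact IsVal.fn
  | con _ ih => exact IsVal.con ih
  | atom => exact IsVal.atom
  | bindv _ _ ih₁ ih₂ => exact IsVal.bindv ih₁ ih₂

theorem isVal_renameAtom {t : Tm σ} (h : IsVal t) (x y : Atom) :
    IsVal (t.renameAtom x y) := isVal_mapAtoms h _

theorem mapAtoms_renV (t : Tm σ) (r : ℕ → ℕ) (f : Atom → Atom) :
    (t.renV r).mapAtoms f = (t.mapAtoms f).renV r := by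
  induction t generalizing r <;> simp_all [mapAtoms, renV]

theorem mapAtoms_subst (t : Tm σ) (ρ : ℕ → Tm σ) (f : Atom → Atom) :
    (t.subst ρ).mapAtoms f = (t.mapAtoms f).subst (fun n => (ρ n).mapAtoms f) := by
  have hups : ∀ (ρ : ℕ → Tm σ), (fun n => (ups ρ n).mapAtoms f)
      = ups (fun n => (ρ n).mapAtoms f) := by
    intro ρ; funext n
    cases n with
    | zero => rfl
    | succ n => simp [ups, mapAtoms_renV]
  induction t generalizing ρ with
  | fn e ih => simp [mapAtoms, subst, ih, hups]
  | lett e₁ e₂ ih₁ ih₂ => simp [mapAtoms, subst, ih₁, ih₂, hups]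
  | case t br ih ihbr => simp [mapAtoms, subst, ih, ihbr, hups]
  | _ => simp_all [mapAtoms, subst]

theorem mapAtoms_subst1 (e v : Tm σ) (f : Atom → Atom) :
    (e.subst1 v).mapAtoms f = (e.mapAtoms f).subst1 (v.mapAtoms f) := by
  rw [subst1, subst1, mapAtoms_subst]
  congr 1
  funext n
  cases n <;> rfl

theorem mapAtoms_subst2 (e v u : Tm σ) (f : Atom → Atom) :
    (e.subst2 v u).mapAtoms f = (e.mapAtoms f).subst2 (v.mapAtoms f) (u.mapAtoms f) := by
  rw [subst2, subst2, mapAtoms_subst]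
  congr 1
  funext n
  match n with
  | 0 => rfl
  | 1 => rfl
  | n + 2 => rfl

theorem mapAtoms_renameAtom (t : Tm σ) {f : Atom → Atom} (hf : Function.Injective f)
    (x y : Atom) :
    (t.renameAtom x y).mapAtoms f = (t.mapAtoms f).renameAtom (f x) (f y) := by
  rw [renameAtom, renameAtom, mapAtoms_comp, mapAtoms_comp]
  apply mapAtoms_congr
  intro a _
  simp only [Function.comp_apply]
  by_cases h : a = x
  · simp [h]
  · simp [h, hf.ne h]

theorem renameAtom_eq_mapAtoms_swap (t : Tm σ) {x y : Atom} (hy : y ∉ t.atoms ∨ x = y) :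
    t.renameAtom x y = t.mapAtoms (Equiv.swap x y) := by
  apply mapAtoms_congr
  intro a ha
  rcases hy with hy | rfl
  · by_cases h : a = x
    · simp [h]
    · have : a ≠ y := fun h' => hy (h' ▸ ha)
      simp [h, Equiv.swap_apply_of_ne_of_ne h this]
  · by_cases h : a = x <;> simp [h]

theorem renameAtom_of_not_mem (t : Tm σ) {x : Atom} (h : x ∉ t.atoms) (y : Atom) :
    t.renameAtom x y = t := by
  rw [renameAtom]
  calc t.mapAtoms _ = t.mapAtoms id := by
        apply mapAtoms_congr; intro a ha
        have : a ≠ x := fun h' => h (h' ▸ ha)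
        simp [this]
    _ = t := mapAtoms_id t

theorem atoms_renameAtom_subset (t : Tm σ) (x y : Atom) :
    (t.renameAtom x y).atoms ⊆ insert y t.atoms := by
  rw [renameAtom, atoms_mapAtoms]
  intro a
  simp only [Finset.mem_image, Finset.mem_insert]
  rintro ⟨b, hb, rfl⟩
  by_cases h : b = x <;> simp [h, hb]

theorem not_mem_atoms_renameAtom (t : Tm σ) {x y : Atom} (hxy : x ≠ y) :
    x ∉ (t.renameAtom x y).atoms := by
  rw [renameAtom, atoms_mapAtoms]
  simp only [Finset.mem_image, not_exists, not_and]
  intro b _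
  by_cases h : b = x
  · simp [h, hxy.symm]
  · simpa [h] using Ne.symm h

end Tm
/-! ### Closedness, weakening, typing stability -/

namespace Tm

variable {σ : Sig}

def ClosedAt : ℕ → Tm σ → Prop
  | k, .var n => n < k
  | _, .unit => True
  | k, .pair t₁ t₂ => ClosedAt k t₁ ∧ ClosedAt k t₂
  | k, .fn e => ClosedAt (k + 2) e
  | k, .con _ t => ClosedAt k t
  | _, .atom _ => True
  | k, .bindv t₁ t₂ => ClosedAt k t₁ ∧ ClosedAt k t₂
  | k, .lett e₁ e₂ => ClosedAt k e₁ ∧ ClosedAt (k + 1) e₂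
  | k, .fst t => ClosedAt k t
  | k, .snd t => ClosedAt k t
  | k, .app t₁ t₂ => ClosedAt k t₁ ∧ ClosedAt k t₂
  | k, .case t br => ClosedAt k t ∧ ∀ c, ClosedAt (k + 1) (br c)
  | _, .fresh => True
  | k, .unbind t => ClosedAt k t
  | k, .obs _ args => ∀ i, ClosedAt k (args i)

theorem renV_closed {t : Tm σ} {k : ℕ} (h : ClosedAt k t) (r : ℕ → ℕ)
    (hr : ∀ n < k, r n = n) : t.renV r = t := by
  induction t generalizing k r with
  | var n => simp [ClosedAt] at h; simp [renV, hr n h]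
  | unit => rfl
  | pair t₁ t₂ ih₁ ih₂ =>
      obtain ⟨h₁, h₂⟩ := h; simp [renV, ih₁ h₁ r hr, ih₂ h₂ r hr]
  | fn e ih =>
      simp only [renV]
      rw [ih (k := k + 2) h]
      intro n hn
      match n, hn with
      | 0, _ => rfl
      | 1, _ => simp [upr]
      | n + 2, hn => simp [upr, hr n (by omega)]
  | con c t ih => simp [renV, ih h r hr]
  | atom => rfl
  | bindv t₁ t₂ ih₁ ih₂ =>
      obtain ⟨h₁, h₂⟩ := h; simp [renV, ih₁ h₁ r hr, ih₂ h₂ r hr]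
  | lett e₁ e₂ ih₁ ih₂ =>
      obtain ⟨h₁, h₂⟩ := h
      simp only [renV]
      rw [ih₁ h₁ r hr, ih₂ (k := k + 1) h₂]
      intro n hn
      match n, hn with
      | 0, _ => rfl
      | n + 1, hn => simp [upr, hr n (by omega)]
  | fst t ih => simp [renV, ih h r hr]
  | snd t ih => simp [renV, ih h r hr]
  | app t₁ t₂ ih₁ ih₂ =>
      obtain ⟨h₁, h₂⟩ := h; simp [renV, ih₁ h₁ r hr, ih₂ h₂ r hr]
  | case t br ih ihbr =>
      obtain ⟨h₁, h₂⟩ := h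
      simp only [renV]
      rw [ih h₁ r hr]
      congr 1
      funext c
      rw [ihbr c (k := k + 1) (h₂ c)]
      intro n hn
      match n, hn with
      | 0, _ => rfl
      | n + 1, hn => simp [upr, hr n (by omega)]
  | fresh => rfl
  | unbind t ih => simp [renV, ih h r hr]
  | obs o args ih =>
      simp only [renV]
      congr 1
      funext i
      exact ih i (h i) r hr

theorem subst_closed {t : Tm σ} {k : ℕ} (h : ClosedAt k t) (ρ : ℕ → Tm σ)
    (hρ : ∀ n < k, ρ n = .var n) : t.subst ρ = t := by
  induction t generalizing k ρ with
  | var n => simp [ClosedAt] at h; simp [subst, hρ n h]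
  | unit => rfl
  | pair t₁ t₂ ih₁ ih₂ =>
      obtain ⟨h₁, h₂⟩ := h; simp [subst, ih₁ h₁ ρ hρ, ih₂ h₂ ρ hρ]
  | fn e ih =>
      simp only [subst]
      rw [ih (k := k + 2) h]
      intro n hn
      match n, hn with
      | 0, _ => rfl
      | 1, _ => rfl
      | n + 2, hn => simp [ups, hρ n (by omega), renV]
  | con c t ih => simp [subst, ih h ρ hρ]
  | atom => rfl
  | bindv t₁ t₂ ih₁ ih₂ =>
      obtain ⟨h₁, h₂⟩ := h; simp [subst, ih₁ h₁ ρ hρ, ih₂ h₂ ρ hρ]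
  | lett e₁ e₂ ih₁ ih₂ =>
      obtain ⟨h₁, h₂⟩ := h
      simp only [subst]
      rw [ih₁ h₁ ρ hρ, ih₂ (k := k + 1) h₂]
      intro n hn
      match n, hn with
      | 0, _ => rfl
      | n + 1, hn => simp [ups, hρ n (by omega)]; rfl
  | fst t ih => simp [subst, ih h ρ hρ]
  | snd t ih => simp [subst, ih h ρ hρ]
  | app t₁ t₂ ih₁ ih₂ =>
      obtain ⟨h₁, h₂⟩ := h; simp [subst, ih₁ h₁ ρ hρ, ih₂ h₂ ρ hρ]
  | case t br ih ihbr =>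
      obtain ⟨h₁, h₂⟩ := h
      simp only [subst]
      rw [ih h₁ ρ hρ]
      congr 1
      funext c
      rw [ihbr c (k := k + 1) (h₂ c)]
      intro n hn
      match n, hn with
      | 0, _ => rfl
      | n + 1, hn => simp [ups, hρ n (by omega)]; rfl
  | fresh => rfl
  | unbind t ih => simp [subst, ih h ρ hρ]
  | obs o args ih =>
      simp only [subst]
      congr 1
      funext i
      exact ih i (h i) ρ hρ

theorem subst_closed₀ {t : Tm σ} (h : ClosedAt 0 t) (ρ : ℕ → Tm σ) :
    t.subst ρ = t := subst_closed h ρ (by omega)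

theorem renV_closed₀ {t : Tm σ} (h : ClosedAt 0 t) (r : ℕ → ℕ) :
    t.renV r = t := renV_closed h r (by omega)

theorem isVal_renV {t : Tm σ} (h : IsVal t) (r : ℕ → ℕ) : IsVal (t.renV r) := by
  induction h generalizing r with
  | var => exact IsVal.var
  | unit => exact IsVal.unit
  | pair _ _ ih₁ ih₂ => exact IsVal.pair (ih₁ r) (ih₂ r)
  | fn => exact IsVal.fn
  | con _ ih => exact IsVal.con (ih r)
  | atom => exact IsVal.atom
  | bindv _ _ ih₁ ih₂ => exact IsVal.bindv (ih₁ r) (ih₂ r)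

end Tm

theorem hasTy_append {Γ : List (Ty σ.D)} {t : Tm σ} {τ : Ty σ.D}
    (h : HasTy σ Γ t τ) (Δ : List (Ty σ.D)) : HasTy σ (Γ ++ Δ) t τ := by
  induction h generalizing Δ with
  | var Γ n τ hn =>
      apply HasTy.var
      obtain ⟨hlt, he⟩ := List.getElem?_eq_some_iff.mp hn
      rw [List.getElem?_append, if_pos hlt]
      exact hn
  | unit => exact HasTy.unit
  | pair hv₁ hv₂ _ _ ih₁ ih₂ => exact HasTy.pair hv₁ hv₂ (ih₁ Δ) (ih₂ Δ)
  | fn _ ih => exact HasTy.fn (ih Δ)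
  | con hv _ ih => exact HasTy.con hv (ih Δ)
  | atom => exact HasTy.atom
  | bindv hv₁ hv₂ _ _ ih₁ ih₂ => exact HasTy.bindv hv₁ hv₂ (ih₁ Δ) (ih₂ Δ)
  | lett _ _ ih₁ ih₂ => exact HasTy.lett (ih₁ Δ) (ih₂ Δ)
  | fst hv _ ih => exact HasTy.fst hv (ih Δ)
  | snd hv _ ih => exact HasTy.snd hv (ih Δ)
  | app hv₁ hv₂ _ _ ih₁ ih₂ => exact HasTy.app hv₁ hv₂ (ih₁ Δ) (ih₂ Δ)
  | case br hv _ _ ih ihbr => exact HasTy.case br hv (ih Δ) (fun c hc => ihbr c hc Δ)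
  | fresh => exact HasTy.fresh
  | unbind hv _ ih => exact HasTy.unbind hv (ih Δ)
  | obs o args hval _ ih => exact HasTy.obs o args hval (fun i => ih i Δ)

theorem hasTy_of_nil {Γ : List (Ty σ.D)} {t : Tm σ} {τ : Ty σ.D}
    (h : HasTy σ [] t τ) : HasTy σ Γ t τ := by
  have := hasTy_append h Γ
  simpa using this

theorem IsVal.mapA {σ : Sig} {t : Tm σ} (h : IsVal t) (f : Atom → Atom) :
    IsVal (t.mapAtoms f) := Tm.isVal_mapAtoms h f

theorem hasTy_mapAtoms {Γ : List (Ty σ.D)} {t : Tm σ} {τ : Ty σ.D}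
    (h : HasTy σ Γ t τ) (f : Atom → Atom) : HasTy σ Γ (t.mapAtoms f) τ := by
  induction h with
  | var Γ n τ hn => exact HasTy.var Γ n τ hn
  | unit => exact HasTy.unit
  | pair hv₁ hv₂ _ _ ih₁ ih₂ =>
      exact HasTy.pair (hv₁.mapA f) (hv₂.mapA f) ih₁ ih₂
  | fn _ ih => exact HasTy.fn ih
  | con hv _ ih => exact HasTy.con (hv.mapA f) ih
  | atom => exact HasTy.atom
  | bindv hv₁ hv₂ _ _ ih₁ ih₂ =>
      exact HasTy.bindv (hv₁.mapA f) (hv₂.mapA f) ih₁ ih₂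
  | lett _ _ ih₁ ih₂ => exact HasTy.lett ih₁ ih₂
  | fst hv _ ih => exact HasTy.fst (hv.mapA f) ih
  | snd hv _ ih => exact HasTy.snd (hv.mapA f) ih
  | app hv₁ hv₂ _ _ ih₁ ih₂ =>
      exact HasTy.app (hv₁.mapA f) (hv₂.mapA f) ih₁ ih₂
  | case br hv _ _ ih ihbr =>
      exact HasTy.case _ (hv.mapA f) ih (fun c hc => ihbr c hc)
  | fresh => exact HasTy.fresh
  | unbind hv _ ih => exact HasTy.unbind (hv.mapA f) ih
  | obs o args hval _ ih =>
      exact HasTy.obs o _ (fun i => (hval i).mapA f) ih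

theorem hasTy_renameAtom {Γ : List (Ty σ.D)} {t : Tm σ} {τ : Ty σ.D}
    (h : HasTy σ Γ t τ) (x y : Atom) : HasTy σ Γ (t.renameAtom x y) τ :=
  hasTy_mapAtoms h _

theorem numeral_hasTy (m : ℕ) : HasTy σ [] (numeral σ m) (Ty.data σ.natD) := by
  induction m with
  | zero =>
      have := HasTy.con (σ := σ) (Γ := []) (c := σ.zeroC) IsVal.unit
        (by rw [σ.zeroArg]; exact HasTy.unit)
      rwa [σ.zeroRes] at this
  | succ m ih =>
      have hval : IsVal (numeral σ m) := by
        clear ih; induction m with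
        | zero => exact IsVal.con IsVal.unit
        | succ m ih => exact IsVal.con ih
      have := HasTy.con (σ := σ) (Γ := []) (c := σ.succC) hval
        (by rw [σ.succArg]; exact ih)
      rwa [σ.succRes] at this

theorem numeral_isVal (m : ℕ) : IsVal (numeral σ m) := by
  induction m with
  | zero => exact IsVal.con IsVal.unit
  | succ m ih => exact IsVal.con ih

theorem numeral_atoms (m : ℕ) : (numeral σ m).atoms = ∅ := by
  induction m with
  | zero => simp [numeral, Tm.atoms]
  | succ m ih => simp [numeral, Tm.atoms, ih]

theorem numeral_mapAtoms (m : ℕ) (f : Atom → Atom) :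
    (numeral σ m).mapAtoms f = numeral σ m := by
  induction m with
  | zero => simp [numeral, Tm.mapAtoms]
  | succ m ih => simp [numeral, Tm.mapAtoms, ih]

namespace Stk

variable {σ : Sig}

theorem atoms_mapAtoms (S : Stk σ) (f : Atom → Atom) :
    (S.mapAtoms f).atoms = S.atoms.image f := by
  induction S with
  | id => simp [mapAtoms, atoms]
  | cons S e ih => simp [mapAtoms, atoms, ih, Tm.atoms_mapAtoms, Finset.image_union]

theorem mapAtoms_comp (S : Stk σ) (f g : Atom → Atom) :
    (S.mapAtoms f).mapAtoms g = S.mapAtoms (g ∘ f) := by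
  induction S <;> simp_all [mapAtoms, Tm.mapAtoms_comp]

theorem mapAtoms_id' (S : Stk σ) : S.mapAtoms _root_.id = S := by
  induction S <;> simp_all [mapAtoms, Tm.mapAtoms_id]

end Stk

theorem hasTyStk_mapAtoms {Γ : List (Ty σ.D)} {S : Stk σ} {τ τ' : Ty σ.D}
    (h : HasTyStk σ Γ S τ τ') (f : Atom → Atom) :
    HasTyStk σ Γ (S.mapAtoms f) τ τ' := by
  induction h with
  | id => exact HasTyStk.id
  | cons he _ ih => exact HasTyStk.cons (hasTy_mapAtoms he f) ih
/-! ### Equivariance of the machine -/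

theorem perm_inv_support (π : Equiv.Perm Atom) (hfin : {a : Atom | π a ≠ a}.Finite) :
    {a : Atom | π⁻¹ a ≠ a}.Finite := by
  have heq : {a : Atom | π⁻¹ a ≠ a} = {a : Atom | π a ≠ a} := by
    ext a
    simp only [Set.mem_setOf_eq, not_iff_not]
    constructor
    · intro hc; conv_lhs => rw [← hc]
      simp
    · intro hc; conv_lhs => rw [← hc]
      simp
  rwa [heq]

theorem swap_support (x y : Atom) : {a : Atom | Equiv.swap x y a ≠ a}.Finite := by
  apply Set.Finite.subset (Set.toFinite {x, y})
  intro a ha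
  simp only [Set.mem_setOf_eq] at ha
  by_contra hmem
  simp only [Set.mem_insert_iff, Set.mem_singleton_iff, not_or] at hmem
  exact ha (Equiv.swap_apply_of_ne_of_ne hmem.1 hmem.2)

theorem list_toFinset_map (l : List Atom) (f : Atom → Atom) :
    (l.map f).toFinset = l.toFinset.image f := by
  induction l with
  | nil => simp
  | cons a l ih => simp [ih]

theorem step_nodup {σ : Sig} {c c' : Config σ} (h : Step σ c c') (hnd : c.st.Nodup) :
    c'.st.Nodup := by
  cases h <;> simp_all [List.nodup_append] <;> exact fun b hb hbe => by subst hbe; contradiction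

theorem step_perm {σ : Sig} (hequiv : ObsEquivariant σ) (π : Equiv.Perm Atom)
    (hfin : {a : Atom | π a ≠ a}.Finite)
    {s s' : List Atom} {S S' : Stk σ} {e e' : Tm σ}
    (hnd : s.Nodup) (h : Step σ ⟨s, S, e⟩ ⟨s', S', e'⟩) :
    Step σ ⟨s.map ⇑π, S.mapAtoms ⇑π, e.mapAtoms ⇑π⟩
           ⟨s'.map ⇑π, S'.mapAtoms ⇑π, e'.mapAtoms ⇑π⟩ := by
  cases h with
  | pop hv =>
      rw [Tm.mapAtoms_subst1]
      exact Step.pop (hv.mapA _)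
  | lett => exact Step.lett
  | case br hv =>
      simp only [Tm.mapAtoms]
      rw [Tm.mapAtoms_subst1]
      exact Step.case _ (hv.mapA _)
  | fst hv₁ hv₂ =>
      simp only [Tm.mapAtoms]
      exact Step.fst (hv₁.mapA _) (hv₂.mapA _)
  | snd hv₁ hv₂ =>
      simp only [Tm.mapAtoms]
      exact Step.snd (hv₁.mapA _) (hv₂.mapA _)
  | app hv =>
      simp only [Tm.mapAtoms]
      rw [Tm.mapAtoms_subst2]
      exact Step.app (hv.mapA _)
  | fresh ha =>
      simp only [Tm.mapAtoms, List.map_append, List.map_cons, List.map_nil]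
      apply Step.fresh
      simp only [List.mem_map, not_exists, not_and]
      intro b hb hc
      exact ha ((π.injective hc) ▸ hb)
  | unbind ha hv =>
      simp only [Tm.mapAtoms, List.map_append, List.map_cons, List.map_nil]
      rw [Tm.mapAtoms_renameAtom _ π.injective]
      apply Step.unbind _ (hv.mapA _)
      simp only [List.mem_map, not_exists, not_and]
      intro b hb hc
      exact ha ((π.injective hc) ▸ hb)
  | obs o as hmem =>
      simp only [Tm.mapAtoms, numeral_mapAtoms]
      have hval : σ.obsVal o s (List.ofFn as)
          = σ.obsVal o (s.map ⇑π) (List.ofFn (⇑π ∘ as)) := by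
        rw [← List.map_ofFn]
        apply hequiv π hfin o s _ hnd (by simp)
        intro a ha
        simp only [List.mem_ofFn, Set.mem_range] at ha
        obtain ⟨i, rfl⟩ := ha
        exact hmem i
      rw [hval]
      exact Step.obs o (fun i => π (as i)) (fun i => List.mem_map_of_mem (hmem i))

theorem termN_perm {σ : Sig} (hequiv : ObsEquivariant σ) (π : Equiv.Perm Atom)
    (hfin : {a : Atom | π a ≠ a}.Finite) {c : Config σ} {n : ℕ}
    (h : TermN σ c n) (hnd : c.st.Nodup) :
    TermN σ ⟨c.st.map ⇑π, c.stk.mapAtoms ⇑π, c.tm.mapAtoms ⇑π⟩ n := by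
  induction h with
  | val hv => exact TermN.val (hv.mapA _)
  | step hst hterm ih =>
      rename_i c c' n
      obtain ⟨s, S, e⟩ := c
      obtain ⟨s', S', e'⟩ := c'
      exact TermN.step (step_perm hequiv π hfin hnd hst)
        (ih (step_nodup hst hnd))

theorem term_perm_iff {σ : Sig} (hequiv : ObsEquivariant σ) (π : Equiv.Perm Atom)
    (hfin : {a : Atom | π a ≠ a}.Finite) {s : List Atom} {S : Stk σ} {e : Tm σ}
    (hnd : s.Nodup) :
    Term σ ⟨s, S, e⟩ ↔ Term σ ⟨s.map ⇑π, S.mapAtoms ⇑π, e.mapAtoms ⇑π⟩ := by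
  constructor
  · rintro ⟨n, hn⟩
    exact ⟨n, termN_perm hequiv π hfin hn hnd⟩
  · rintro ⟨n, hn⟩
    refine ⟨n, ?_⟩
    have hnd' : (s.map ⇑π).Nodup := hnd.map π.injective
    have := termN_perm hequiv π⁻¹ (perm_inv_support π hfin) hn hnd'
    simp only [List.map_map, Stk.mapAtoms_comp, Tm.mapAtoms_comp] at this
    have hc : ⇑π⁻¹ ∘ ⇑π = _root_.id := by
      funext a; simp
    rw [hc, List.map_id, Stk.mapAtoms_id', Tm.mapAtoms_id] at this
    exact this

theorem image_perm_inv (π : Equiv.Perm Atom) (w : Finset Atom) :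
    (w.image ⇑π).image ⇑π⁻¹ = w := by
  rw [Finset.image_image]
  have hc : ⇑π⁻¹ ∘ ⇑π = _root_.id := by funext a; simp
  rw [hc, Finset.image_id]

theorem opEq_perm {σ : Sig} (hequiv : ObsEquivariant σ) (π : Equiv.Perm Atom)
    (hfin : {a : Atom | π a ≠ a}.Finite) {w : Finset Atom} {e e' : Tm σ} {τ : Ty σ.D}
    (h : OpEq σ w e e' τ) :
    OpEq σ (w.image ⇑π) (e.mapAtoms ⇑π) (e'.mapAtoms ⇑π) τ := by
  obtain ⟨hat, hty, hty', hmain⟩ := h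
  refine ⟨?_, hasTy_mapAtoms hty _, hasTy_mapAtoms hty' _, ?_⟩
  · rw [Tm.atoms_mapAtoms, Tm.atoms_mapAtoms, ← Finset.image_union]
    exact Finset.image_subset_image hat
  · intro s S τ' hnd hsub hty2
    have hnd' : (s.map ⇑π⁻¹).Nodup := hnd.map π⁻¹.injective
    have hsub' : w ∪ (S.mapAtoms ⇑π⁻¹).atoms ⊆ (s.map ⇑π⁻¹).toFinset := by
      rw [Stk.atoms_mapAtoms, list_toFinset_map, ← image_perm_inv π w,
        ← Finset.image_union]
      exact Finset.image_subset_image hsub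
    have hmain' := hmain (s.map ⇑π⁻¹) (S.mapAtoms ⇑π⁻¹) τ' hnd' hsub'
      (hasTyStk_mapAtoms hty2 _)
    have h₁ := term_perm_iff hequiv π⁻¹ (perm_inv_support π hfin)
      (S := S) (e := e.mapAtoms ⇑π) hnd
    have h₂ := term_perm_iff hequiv π⁻¹ (perm_inv_support π hfin)
      (S := S) (e := e'.mapAtoms ⇑π) hnd
    rw [Tm.mapAtoms_comp] at h₁ h₂
    have hc : ⇑π⁻¹ ∘ ⇑π = _root_.id := by funext a; simp
    rw [hc, Tm.mapAtoms_id] at h₁ h₂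
    rw [h₁, h₂]
    exact hmain'

theorem opEq_symm {σ : Sig} {w : Finset Atom} {e e' : Tm σ} {τ : Ty σ.D}
    (h : OpEq σ w e e' τ) : OpEq σ w e' e τ := by
  obtain ⟨hat, hty, hty', hmain⟩ := h
  exact ⟨by rwa [Finset.union_comm], hty', hty,
    fun s S τ' h1 h2 h3 => (hmain s S τ' h1 h2 h3).symm⟩

theorem opEq_trans {σ : Sig} {w : Finset Atom} {e₁ e₂ e₃ : Tm σ} {τ : Ty σ.D}
    (h : OpEq σ w e₁ e₂ τ) (h' : OpEq σ w e₂ e₃ τ) : OpEq σ w e₁ e₃ τ := by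
  obtain ⟨hat, hty, hty', hmain⟩ := h
  obtain ⟨hat2, _, hty3, hmain2⟩ := h'
  refine ⟨?_, hty, hty3, fun s S τ' h1 h2 h3 =>
    (hmain s S τ' h1 h2 h3).trans (hmain2 s S τ' h1 h2 h3)⟩
  intro x hx
  rcases Finset.mem_union.mp hx with hx | hx
  · exact hat (Finset.mem_union_left _ hx)
  · exact hat2 (Finset.mem_union_right _ hx)

theorem term_cons_iff {σ : Sig} {s : List Atom} {S : Stk σ} {f u : Tm σ}
    (hval : IsVal u) : Term σ ⟨s, Stk.cons S f, u⟩ ↔ Term σ ⟨s, S, f.subst1 u⟩ := by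
  constructor
  · rintro ⟨n, hn⟩
    cases hn with
    | step hst hterm =>
        cases hst with
        | pop => exact ⟨_, hterm⟩
        | lett => cases hval
        | case => cases hval
        | fst => cases hval
        | snd => cases hval
        | app => cases hval
        | fresh => cases hval
        | unbind => cases hval
        | obs => cases hval
  · rintro ⟨n, hn⟩
    exact ⟨n + 1, TermN.step (Step.pop hval) hn⟩
/-! ### The auxiliary relation -/

theorem Tm.mapAtoms_eq_self {σ : Sig} {t : Tm σ} {f : Atom → Atom}
    (h : ∀ a ∈ t.atoms, f a = a) : t.mapAtoms f = t := by
  rw [Tm.mapAtoms_congr t f _root_.id h, Tm.mapAtoms_id]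

theorem Tm.closedAt_mapAtoms {σ : Sig} {t : Tm σ} {k : ℕ} (h : Tm.ClosedAt k t)
    (f : Atom → Atom) : Tm.ClosedAt k (t.mapAtoms f) := by
  induction t generalizing k <;> simp_all [Tm.mapAtoms, Tm.ClosedAt]

def GoodPair (σ : Sig) (W : Finset Atom) (x y : Atom) (u u' : Tm σ) (τ : Ty σ.D) : Prop :=
  IsVal u ∧ IsVal u' ∧ Tm.ClosedAt 0 u ∧ Tm.ClosedAt 0 u' ∧
  HasTy σ [] u τ ∧ HasTy σ [] u' τ ∧
  ∃ w0 : Finset Atom, w0 ⊆ W ∧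
    (Tm.bindv (Tm.atom x) u).atoms ∪ (Tm.bindv (Tm.atom y) u').atoms ⊆ w0 ∧
    ∀ d, d ∉ w0 → OpEq σ (insert d w0) (u.renameAtom x d) (u'.renameAtom y d) τ

inductive HRel (σ : Sig) (W : Finset Atom) :
    List (Ty σ.D) → Tm σ → Tm σ → Ty σ.D → Prop where
  | var (Γ : List (Ty σ.D)) (n : ℕ) (τ : Ty σ.D) :
      Γ[n]? = some τ → HRel σ W Γ (Tm.var n) (Tm.var n) τ
  | unit : HRel σ W Γ Tm.unit Tm.unit Ty.unit
  | pair : IsVal v₁ → IsVal v₂ → IsVal v₁' → IsVal v₂' →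
      HRel σ W Γ v₁ v₁' τ₁ → HRel σ W Γ v₂ v₂' τ₂ →
      HRel σ W Γ (Tm.pair v₁ v₂) (Tm.pair v₁' v₂') (Ty.prod τ₁ τ₂)
  | fn : HRel σ W (τ :: Ty.arrow τ τ' :: Γ) e e' τ' →
      HRel σ W Γ (Tm.fn e) (Tm.fn e') (Ty.arrow τ τ')
  | con : IsVal v → IsVal v' → HRel σ W Γ v v' (σ.argTy c) →
      HRel σ W Γ (Tm.con c v) (Tm.con c v') (Ty.data (σ.resTy c))
  | atom : HRel σ W Γ (Tm.atom a) (Tm.atom a) Ty.atm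
  | bindv : IsVal v₁ → IsVal v₂ → IsVal v₁' → IsVal v₂' →
      HRel σ W Γ v₁ v₁' Ty.atm → HRel σ W Γ v₂ v₂' τ →
      HRel σ W Γ (Tm.bindv v₁ v₂) (Tm.bindv v₁' v₂') (Ty.bnd τ)
  | lett : HRel σ W Γ e₁ e₁' τ → HRel σ W (τ :: Γ) e₂ e₂' τ' →
      HRel σ W Γ (Tm.lett e₁ e₂) (Tm.lett e₁' e₂') τ'
  | fst : IsVal v → IsVal v' → HRel σ W Γ v v' (Ty.prod τ₁ τ₂) →
      HRel σ W Γ (Tm.fst v) (Tm.fst v') τ₁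
  | snd : IsVal v → IsVal v' → HRel σ W Γ v v' (Ty.prod τ₁ τ₂) →
      HRel σ W Γ (Tm.snd v) (Tm.snd v') τ₂
  | app : IsVal v₁ → IsVal v₂ → IsVal v₁' → IsVal v₂' →
      HRel σ W Γ v₁ v₁' (Ty.arrow τ τ') → HRel σ W Γ v₂ v₂' τ →
      HRel σ W Γ (Tm.app v₁ v₂) (Tm.app v₁' v₂') τ'
  | case (br br' : σ.C → Tm σ) : IsVal v → IsVal v' → HRel σ W Γ v v' (Ty.data δ) →
      (∀ c, σ.resTy c = δ → HRel σ W (σ.argTy c :: Γ) (br c) (br' c) τ) →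
      HRel σ W Γ (Tm.case v br) (Tm.case v' br') τ
  | fresh : HRel σ W Γ Tm.fresh Tm.fresh Ty.atm
  | unbind : IsVal v → IsVal v' → HRel σ W Γ v v' (Ty.bnd τ) →
      HRel σ W Γ (Tm.unbind v) (Tm.unbind v') (Ty.prod Ty.atm τ)
  | obs (o : σ.O) (args args' : Fin (σ.arity o) → Tm σ) :
      (∀ i, IsVal (args i)) → (∀ i, IsVal (args' i)) →
      (∀ i, HRel σ W Γ (args i) (args' i) Ty.atm) →
      HRel σ W Γ (Tm.obs o args) (Tm.obs o args') (Ty.data σ.natD)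
  | base : GoodPair σ W x y u u' τ →
      HRel σ W Γ (Tm.bindv (Tm.atom x) u) (Tm.bindv (Tm.atom y) u') (Ty.bnd τ)

inductive StkR (σ : Sig) (W : Finset Atom) : Stk σ → Stk σ → Ty σ.D → Ty σ.D → Prop where
  | id : StkR σ W Stk.id Stk.id τ τ
  | cons : HRel σ W [τ] e e' τ' → StkR σ W S S' τ' τ'' →
      StkR σ W (Stk.cons S e) (Stk.cons S' e') τ τ''

theorem goodPair_hasTy {σ : Sig} {W x y u u' τ} (h : GoodPair σ W x y u u' τ) :
    ∀ Γ, HasTy σ Γ (Tm.bindv (Tm.atom x) u) (Ty.bnd τ) ∧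
      HasTy σ Γ (Tm.bindv (Tm.atom y) u') (Ty.bnd τ) := by
  obtain ⟨hv, hv', _, _, ht, ht', _⟩ := h
  intro Γ
  exact ⟨HasTy.bindv IsVal.atom hv HasTy.atom (hasTy_of_nil ht),
    HasTy.bindv IsVal.atom hv' HasTy.atom (hasTy_of_nil ht')⟩

theorem hrel_hasTy {σ : Sig} {W Γ} {t t' : Tm σ} {τ} (h : HRel σ W Γ t t' τ) :
    HasTy σ Γ t τ ∧ HasTy σ Γ t' τ := by
  induction h with
  | var Γ n τ hn => exact ⟨HasTy.var Γ n τ hn, HasTy.var Γ n τ hn⟩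
  | unit => exact ⟨HasTy.unit, HasTy.unit⟩
  | pair h1 h2 h3 h4 _ _ ih₁ ih₂ =>
      exact ⟨HasTy.pair h1 h2 ih₁.1 ih₂.1, HasTy.pair h3 h4 ih₁.2 ih₂.2⟩
  | fn _ ih => exact ⟨HasTy.fn ih.1, HasTy.fn ih.2⟩
  | con h1 h2 _ ih => exact ⟨HasTy.con h1 ih.1, HasTy.con h2 ih.2⟩
  | atom => exact ⟨HasTy.atom, HasTy.atom⟩
  | bindv h1 h2 h3 h4 _ _ ih₁ ih₂ =>
      exact ⟨HasTy.bindv h1 h2 ih₁.1 ih₂.1, HasTy.bindv h3 h4 ih₁.2 ih₂.2⟩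
  | lett _ _ ih₁ ih₂ => exact ⟨HasTy.lett ih₁.1 ih₂.1, HasTy.lett ih₁.2 ih₂.2⟩
  | fst h1 h2 _ ih => exact ⟨HasTy.fst h1 ih.1, HasTy.fst h2 ih.2⟩
  | snd h1 h2 _ ih => exact ⟨HasTy.snd h1 ih.1, HasTy.snd h2 ih.2⟩
  | app h1 h2 h3 h4 _ _ ih₁ ih₂ =>
      exact ⟨HasTy.app h1 h2 ih₁.1 ih₂.1, HasTy.app h3 h4 ih₁.2 ih₂.2⟩
  | case br br' h1 h2 _ _ ih ihbr =>
      exact ⟨HasTy.case br h1 ih.1 (fun c hc => (ihbr c hc).1),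
        HasTy.case br' h2 ih.2 (fun c hc => (ihbr c hc).2)⟩
  | fresh => exact ⟨HasTy.fresh, HasTy.fresh⟩
  | unbind h1 h2 _ ih => exact ⟨HasTy.unbind h1 ih.1, HasTy.unbind h2 ih.2⟩
  | obs o args args' hv hv' _ ih =>
      exact ⟨HasTy.obs o args hv (fun i => (ih i).1),
        HasTy.obs o args' hv' (fun i => (ih i).2)⟩
  | base hg => exact goodPair_hasTy hg _

theorem hrel_isVal {σ : Sig} {W Γ} {t t' : Tm σ} {τ} (h : HRel σ W Γ t t' τ)
    (hv : IsVal t) : IsVal t' := by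
  induction h with
  | var => exact IsVal.var
  | unit => exact IsVal.unit
  | pair _ _ h3 h4 => exact IsVal.pair h3 h4
  | fn => exact IsVal.fn
  | con _ h2 _ ih => exact IsVal.con h2
  | atom => exact IsVal.atom
  | bindv _ _ h3 h4 => exact IsVal.bindv h3 h4
  | lett => cases hv
  | fst => cases hv
  | snd => cases hv
  | app => cases hv
  | case => cases hv
  | fresh => cases hv
  | unbind => cases hv
  | obs => cases hv
  | base hg => exact IsVal.bindv IsVal.atom hg.2.1

theorem goodPair_mono {σ : Sig} {W W' : Finset Atom} {x y u u' τ}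
    (h : GoodPair σ W x y u u' τ) (hW : W ⊆ W') : GoodPair σ W' x y u u' τ := by
  obtain ⟨h1, h2, h3, h4, h5, h6, w0, hw, hat, H⟩ := h
  exact ⟨h1, h2, h3, h4, h5, h6, w0, hw.trans hW, hat, H⟩

theorem hrel_mono {σ : Sig} {W W' : Finset Atom} {Γ} {t t' : Tm σ} {τ}
    (h : HRel σ W Γ t t' τ) (hW : W ⊆ W') : HRel σ W' Γ t t' τ := by
  induction h with
  | var Γ n τ hn => exact HRel.var Γ n τ hn
  | unit => exact HRel.unit
  | pair h1 h2 h3 h4 _ _ ih₁ ih₂ => exact HRel.pair h1 h2 h3 h4 ih₁ ih₂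
  | fn _ ih => exact HRel.fn ih
  | con h1 h2 _ ih => exact HRel.con h1 h2 ih
  | atom => exact HRel.atom
  | bindv h1 h2 h3 h4 _ _ ih₁ ih₂ => exact HRel.bindv h1 h2 h3 h4 ih₁ ih₂
  | lett _ _ ih₁ ih₂ => exact HRel.lett ih₁ ih₂
  | fst h1 h2 _ ih => exact HRel.fst h1 h2 ih
  | snd h1 h2 _ ih => exact HRel.snd h1 h2 ih
  | app h1 h2 h3 h4 _ _ ih₁ ih₂ => exact HRel.app h1 h2 h3 h4 ih₁ ih₂
  | case br br' h1 h2 _ _ ih ihbr => exact HRel.case br br' h1 h2 ih (fun c hc => ihbr c hc)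
  | fresh => exact HRel.fresh
  | unbind h1 h2 _ ih => exact HRel.unbind h1 h2 ih
  | obs o args args' hv hv' _ ih => exact HRel.obs o args args' hv hv' ih
  | base hg => exact HRel.base (goodPair_mono hg hW)

theorem hrel_refl {σ : Sig} {W Γ} {t : Tm σ} {τ} (h : HasTy σ Γ t τ) :
    HRel σ W Γ t t τ := by
  induction h with
  | var Γ n τ hn => exact HRel.var Γ n τ hn
  | unit => exact HRel.unit
  | pair h1 h2 _ _ ih₁ ih₂ => exact HRel.pair h1 h2 h1 h2 ih₁ ih₂
  | fn _ ih => exact HRel.fn ih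
  | con h1 _ ih => exact HRel.con h1 h1 ih
  | atom => exact HRel.atom
  | bindv h1 h2 _ _ ih₁ ih₂ => exact HRel.bindv h1 h2 h1 h2 ih₁ ih₂
  | lett _ _ ih₁ ih₂ => exact HRel.lett ih₁ ih₂
  | fst h1 _ ih => exact HRel.fst h1 h1 ih
  | snd h1 _ ih => exact HRel.snd h1 h1 ih
  | app h1 h2 _ _ ih₁ ih₂ => exact HRel.app h1 h2 h1 h2 ih₁ ih₂
  | case br h1 _ _ ih ihbr => exact HRel.case br br h1 h1 ih (fun c hc => ihbr c hc)
  | fresh => exact HRel.fresh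
  | unbind h1 _ ih => exact HRel.unbind h1 h1 ih
  | obs o args hv _ ih => exact HRel.obs o args args hv hv ih

theorem goodPair_symm {σ : Sig} {W x y u u' τ} (h : GoodPair σ W x y u u' τ) :
    GoodPair σ W y x u' u τ := by
  obtain ⟨h1, h2, h3, h4, h5, h6, w0, hw, hat, H⟩ := h
  exact ⟨h2, h1, h4, h3, h6, h5, w0, hw, by rwa [Finset.union_comm],
    fun d hd => opEq_symm (H d hd)⟩

theorem hrel_symm {σ : Sig} {W Γ} {t t' : Tm σ} {τ} (h : HRel σ W Γ t t' τ) :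
    HRel σ W Γ t' t τ := by
  induction h with
  | var Γ n τ hn => exact HRel.var Γ n τ hn
  | unit => exact HRel.unit
  | pair h1 h2 h3 h4 _ _ ih₁ ih₂ => exact HRel.pair h3 h4 h1 h2 ih₁ ih₂
  | fn _ ih => exact HRel.fn ih
  | con h1 h2 _ ih => exact HRel.con h2 h1 ih
  | atom => exact HRel.atom
  | bindv h1 h2 h3 h4 _ _ ih₁ ih₂ => exact HRel.bindv h3 h4 h1 h2 ih₁ ih₂
  | lett _ _ ih₁ ih₂ => exact HRel.lett ih₁ ih₂
  | fst h1 h2 _ ih => exact HRel.fst h2 h1 ih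
  | snd h1 h2 _ ih => exact HRel.snd h2 h1 ih
  | app h1 h2 h3 h4 _ _ ih₁ ih₂ => exact HRel.app h3 h4 h1 h2 ih₁ ih₂
  | case br br' h1 h2 _ _ ih ihbr => exact HRel.case br' br h2 h1 ih (fun c hc => ihbr c hc)
  | fresh => exact HRel.fresh
  | unbind h1 h2 _ ih => exact HRel.unbind h2 h1 ih
  | obs o args args' hv hv' _ ih => exact HRel.obs o args' args hv' hv ih
  | base hg => exact HRel.base (goodPair_symm hg)
/-! ### Substitution and renaming closure -/

namespace Tm

variable {σ : Sig}

@[simp] theorem renameAtom_var (n z d) : (Tm.var (σ := σ) n).renameAtom z d = Tm.var n := rfl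
@[simp] theorem renameAtom_unit (z d) : (Tm.unit (σ := σ)).renameAtom z d = Tm.unit := rfl
@[simp] theorem renameAtom_pair (t₁ t₂ : Tm σ) (z d) :
    (Tm.pair t₁ t₂).renameAtom z d = Tm.pair (t₁.renameAtom z d) (t₂.renameAtom z d) := rfl
@[simp] theorem renameAtom_fn (e : Tm σ) (z d) :
    (Tm.fn e).renameAtom z d = Tm.fn (e.renameAtom z d) := rfl
@[simp] theorem renameAtom_con (c) (t : Tm σ) (z d) :
    (Tm.con c t).renameAtom z d = Tm.con c (t.renameAtom z d) := rfl
@[simp] theorem renameAtom_atom (a z d : Atom) :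
    (Tm.atom (σ := σ) a).renameAtom z d = Tm.atom (if a = z then d else a) := rfl
@[simp] theorem renameAtom_bindv (t₁ t₂ : Tm σ) (z d) :
    (Tm.bindv t₁ t₂).renameAtom z d = Tm.bindv (t₁.renameAtom z d) (t₂.renameAtom z d) := rfl
@[simp] theorem renameAtom_lett (t₁ t₂ : Tm σ) (z d) :
    (Tm.lett t₁ t₂).renameAtom z d = Tm.lett (t₁.renameAtom z d) (t₂.renameAtom z d) := rfl
@[simp] theorem renameAtom_fst (t : Tm σ) (z d) :
    (Tm.fst t).renameAtom z d = Tm.fst (t.renameAtom z d) := rfl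
@[simp] theorem renameAtom_snd (t : Tm σ) (z d) :
    (Tm.snd t).renameAtom z d = Tm.snd (t.renameAtom z d) := rfl
@[simp] theorem renameAtom_app (t₁ t₂ : Tm σ) (z d) :
    (Tm.app t₁ t₂).renameAtom z d = Tm.app (t₁.renameAtom z d) (t₂.renameAtom z d) := rfl
@[simp] theorem renameAtom_case (t : Tm σ) (br : σ.C → Tm σ) (z d) :
    (Tm.case t br).renameAtom z d
      = Tm.case (t.renameAtom z d) (fun c => (br c).renameAtom z d) := rfl
@[simp] theorem renameAtom_fresh (z d) :
    (Tm.fresh (σ := σ)).renameAtom z d = Tm.fresh := rfl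
@[simp] theorem renameAtom_unbind (t : Tm σ) (z d) :
    (Tm.unbind t).renameAtom z d = Tm.unbind (t.renameAtom z d) := rfl
@[simp] theorem renameAtom_obs (o : σ.O) (args : Fin (σ.arity o) → Tm σ) (z d) :
    (Tm.obs o args).renameAtom z d = Tm.obs o (fun i => (args i).renameAtom z d) := rfl

theorem atoms_renV (t : Tm σ) (r : ℕ → ℕ) : (t.renV r).atoms = t.atoms := by
  induction t generalizing r with
  | case t br ih ihbr =>
      simp only [renV, atoms, ih]
      congr 1
      ext a
      simp only [Finset.mem_biUnion, Finset.mem_univ, true_and, ihbr]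
  | obs o args ih =>
      simp only [renV, atoms]
      ext a
      simp only [Finset.mem_biUnion, Finset.mem_univ, true_and, ih]
  | _ => simp_all [renV, atoms]

theorem atoms_subst_subset (t : Tm σ) (ρ : ℕ → Tm σ) (A : Finset Atom)
    (h : ∀ n, (ρ n).atoms ⊆ A) : (t.subst ρ).atoms ⊆ t.atoms ∪ A := by
  have hups : ∀ (ρ : ℕ → Tm σ), (∀ n, (ρ n).atoms ⊆ A) → ∀ n, ((ups ρ) n).atoms ⊆ A := by
    intro ρ hρ n
    cases n with
    | zero => simp [ups, atoms]
    | succ n => rw [ups, atoms_renV]; exact hρ n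
  induction t generalizing ρ with
  | var n => simpa [subst, atoms] using h n
  | unit => simp [subst, atoms]
  | pair t₁ t₂ ih₁ ih₂ =>
      simp only [subst, atoms, Finset.union_subset_iff]
      constructor
      · exact (ih₁ ρ h).trans (by intro b; simp; tauto)
      · exact (ih₂ ρ h).trans (by intro b; simp; tauto)
  | fn e ih =>
      simp only [subst, atoms]
      exact ih _ (hups _ (hups _ h))
  | con c t ih => simpa [subst, atoms] using ih ρ h
  | atom a => simp [subst, atoms]
  | bindv t₁ t₂ ih₁ ih₂ =>
      simp only [subst, atoms, Finset.union_subset_iff]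
      constructor
      · exact (ih₁ ρ h).trans (by intro b; simp; tauto)
      · exact (ih₂ ρ h).trans (by intro b; simp; tauto)
  | lett t₁ t₂ ih₁ ih₂ =>
      simp only [subst, atoms, Finset.union_subset_iff]
      constructor
      · exact (ih₁ ρ h).trans (by intro b; simp; tauto)
      · exact (ih₂ _ (hups _ h)).trans (by intro b; simp; tauto)
  | fst t ih => simpa [subst, atoms] using ih ρ h
  | snd t ih => simpa [subst, atoms] using ih ρ h
  | app t₁ t₂ ih₁ ih₂ =>
      simp only [subst, atoms, Finset.union_subset_iff]
      constructor
      · exact (ih₁ ρ h).trans (by intro b; simp; tauto)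
      · exact (ih₂ ρ h).trans (by intro b; simp; tauto)
  | case t br ih ihbr =>
      simp only [subst, atoms, Finset.union_subset_iff]
      constructor
      · exact (ih ρ h).trans (by intro b; simp; tauto)
      · intro b hb
        simp only [Finset.mem_biUnion, Finset.mem_univ, true_and] at hb
        obtain ⟨c, hc⟩ := hb
        have := ihbr c _ (hups _ h) hc
        simp only [Finset.mem_union] at this ⊢
        rcases this with hh | hh
        · exact Or.inl (Or.inr (Finset.mem_biUnion.mpr ⟨c, Finset.mem_univ c, hh⟩))
        · exact Or.inr hh
  | fresh => simp [subst, atoms]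
  | unbind t ih => simpa [subst, atoms] using ih ρ h
  | obs o args ih =>
      simp only [subst, atoms]
      intro b hb
      simp only [Finset.mem_biUnion, Finset.mem_univ, true_and] at hb
      obtain ⟨i, hi⟩ := hb
      have := ih i ρ h hi
      simp only [Finset.mem_union] at this ⊢
      rcases this with hh | hh
      · exact Or.inl (Finset.mem_biUnion.mpr ⟨i, Finset.mem_univ i, hh⟩)
      · exact Or.inr hh

theorem atoms_subst1 (e v : Tm σ) : (e.subst1 v).atoms ⊆ e.atoms ∪ v.atoms := by
  apply atoms_subst_subset
  intro n
  cases n <;> simp [cons1, atoms]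

theorem atoms_subst2 (e v u : Tm σ) :
    (e.subst2 v u).atoms ⊆ e.atoms ∪ (v.atoms ∪ u.atoms) := by
  apply atoms_subst_subset
  intro n
  match n with
  | 0 => simp [cons2]
  | 1 => simp [cons2]
  | n + 2 => simp [cons2, atoms]

theorem isVal_subst {t : Tm σ} (h : IsVal t) (ρ : ℕ → Tm σ)
    (hρ : ∀ n, IsVal (ρ n)) : IsVal (t.subst ρ) := by
  induction h generalizing ρ with
  | var => exact hρ _
  | unit => exact IsVal.unit
  | pair _ _ ih₁ ih₂ => exact IsVal.pair (ih₁ ρ hρ) (ih₂ ρ hρ)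
  | fn => exact IsVal.fn
  | con _ ih => exact IsVal.con (ih ρ hρ)
  | atom => exact IsVal.atom
  | bindv _ _ ih₁ ih₂ => exact IsVal.bindv (ih₁ ρ hρ) (ih₂ ρ hρ)

theorem isVal_ups {ρ : ℕ → Tm σ} (hρ : ∀ n, IsVal (ρ n)) : ∀ n, IsVal (ups ρ n) := by
  intro n
  cases n with
  | zero => exact IsVal.var
  | succ n => exact isVal_renV (hρ n) _

end Tm

theorem IsVal.renV {σ : Sig} {t : Tm σ} (h : IsVal t) (r : ℕ → ℕ) :
    IsVal (t.renV r) := Tm.isVal_renV h r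

theorem IsVal.subst {σ : Sig} {t : Tm σ} (h : IsVal t) (ρ : ℕ → Tm σ)
    (hρ : ∀ n, IsVal (ρ n)) : IsVal (t.subst ρ) := Tm.isVal_subst h ρ hρ

theorem IsVal.renameAtom' {σ : Sig} {t : Tm σ} (h : IsVal t) (z d : Atom) :
    IsVal (t.renameAtom z d) := Tm.isVal_renameAtom h z d

theorem lookup_lift {σ : Sig} {Γ Δ : List (Ty σ.D)} {r : ℕ → ℕ}
    (hr : ∀ n τ', Γ[n]? = some τ' → Δ[r n]? = some τ') (τ0 : Ty σ.D) :
    ∀ n τ', (τ0 :: Γ)[n]? = some τ' → (τ0 :: Δ)[upr r n]? = some τ' := by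
  intro n τ' hn
  cases n with
  | zero => simpa [upr] using hn
  | succ n =>
      simp only [List.getElem?_cons_succ] at hn
      simpa [upr] using hr n τ' hn

theorem hrel_renV {σ : Sig} {W Γ} {t t' : Tm σ} {τ} (h : HRel σ W Γ t t' τ) :
    ∀ (Δ : List (Ty σ.D)) (r : ℕ → ℕ),
      (∀ n τ', Γ[n]? = some τ' → Δ[r n]? = some τ') →
      HRel σ W Δ (t.renV r) (t'.renV r) τ := by
  induction h with
  | var Γ n τ hn => intro Δ r hr; exact HRel.var Δ (r n) τ (hr n τ hn)
  | unit => intro Δ r hr; exact HRel.unit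
  | pair h1 h2 h3 h4 _ _ ih₁ ih₂ =>
      intro Δ r hr
      exact HRel.pair (h1.renV r) (h2.renV r) (h3.renV r) (h4.renV r)
        (ih₁ Δ r hr) (ih₂ Δ r hr)
  | fn _ ih =>
      intro Δ r hr
      exact HRel.fn (ih _ _ (lookup_lift (lookup_lift hr _) _))
  | con h1 h2 _ ih =>
      intro Δ r hr
      exact HRel.con (h1.renV r) (h2.renV r) (ih Δ r hr)
  | atom => intro Δ r hr; exact HRel.atom
  | bindv h1 h2 h3 h4 _ _ ih₁ ih₂ =>
      intro Δ r hr
      exact HRel.bindv (h1.renV _) (h2.renV _) (h3.renV _) (h4.renV _)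
        (ih₁ Δ r hr) (ih₂ Δ r hr)
  | lett _ _ ih₁ ih₂ =>
      intro Δ r hr
      exact HRel.lett (ih₁ Δ r hr) (ih₂ _ _ (lookup_lift hr _))
  | fst h1 h2 _ ih =>
      intro Δ r hr
      exact HRel.fst (h1.renV _) (h2.renV _) (ih Δ r hr)
  | snd h1 h2 _ ih =>
      intro Δ r hr
      exact HRel.snd (h1.renV _) (h2.renV _) (ih Δ r hr)
  | app h1 h2 h3 h4 _ _ ih₁ ih₂ =>
      intro Δ r hr
      exact HRel.app (h1.renV _) (h2.renV _) (h3.renV _) (h4.renV _)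
        (ih₁ Δ r hr) (ih₂ Δ r hr)
  | case br br' h1 h2 _ _ ih ihbr =>
      intro Δ r hr
      exact HRel.case _ _ (h1.renV _) (h2.renV _) (ih Δ r hr)
        (fun c hc => ihbr c hc _ _ (lookup_lift hr _))
  | fresh => intro Δ r hr; exact HRel.fresh
  | unbind h1 h2 _ ih =>
      intro Δ r hr
      exact HRel.unbind (h1.renV _) (h2.renV _) (ih Δ r hr)
  | obs o args args' hv hv' _ ih =>
      intro Δ r hr
      exact HRel.obs o _ _ (fun i => (hv i).renV _) (fun i => (hv' i).renV _)
        (fun i => ih i Δ r hr)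
  | base hg =>
      intro Δ r hr
      obtain ⟨h1, h2, h3, h4, rest⟩ := hg
      simp only [Tm.renV]
      rw [Tm.renV_closed₀ h3, Tm.renV_closed₀ h4]
      exact HRel.base ⟨h1, h2, h3, h4, rest⟩

theorem hrel_subst {σ : Sig} {W Γ} {t t' : Tm σ} {τ} (h : HRel σ W Γ t t' τ) :
    ∀ (Δ : List (Ty σ.D)) (ρ ρ' : ℕ → Tm σ),
      (∀ n, IsVal (ρ n) ∧ IsVal (ρ' n)) →
      (∀ n τ', Γ[n]? = some τ' → HRel σ W Δ (ρ n) (ρ' n) τ') →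
      HRel σ W Δ (t.subst ρ) (t'.subst ρ') τ := by
  have hlift : ∀ (Δ : List (Ty σ.D)) (ρ ρ' : ℕ → Tm σ) (τ0 : Ty σ.D)
      (Γ : List (Ty σ.D)),
      (∀ n τ', Γ[n]? = some τ' → HRel σ W Δ (ρ n) (ρ' n) τ') →
      (∀ n τ', (τ0 :: Γ)[n]? = some τ' →
        HRel σ W (τ0 :: Δ) (Tm.ups ρ n) (Tm.ups ρ' n) τ') := by
    intro Δ ρ ρ' τ0 Γ hρ n τ' hn
    cases n with
    | zero =>
        simp only [List.getElem?_cons_zero, Option.some_inj] at hn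
        exact HRel.var _ 0 τ' (by simp [hn])
    | succ n =>
        simp only [List.getElem?_cons_succ] at hn
        exact hrel_renV (hρ n τ' hn) (τ0 :: Δ) Nat.succ (by intro m τ'' hm; simpa using hm)
  have hvlift : ∀ (ρ ρ' : ℕ → Tm σ), (∀ n, IsVal (ρ n) ∧ IsVal (ρ' n)) →
      ∀ n, IsVal (Tm.ups ρ n) ∧ IsVal (Tm.ups ρ' n) := by
    intro ρ ρ' hv n
    exact ⟨Tm.isVal_ups (fun m => (hv m).1) n, Tm.isVal_ups (fun m => (hv m).2) n⟩
  induction h with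
  | var Γ n τ hn => intro Δ ρ ρ' hv hρ; exact hρ n τ hn
  | unit => intro Δ ρ ρ' hv hρ; exact HRel.unit
  | pair h1 h2 h3 h4 _ _ ih₁ ih₂ =>
      intro Δ ρ ρ' hv hρ
      exact HRel.pair (h1.subst _ (fun n => (hv n).1)) (h2.subst _ (fun n => (hv n).1))
        (h3.subst _ (fun n => (hv n).2)) (h4.subst _ (fun n => (hv n).2))
        (ih₁ Δ ρ ρ' hv hρ) (ih₂ Δ ρ ρ' hv hρ)
  | fn _ ih =>
      intro Δ ρ ρ' hv hρ
      exact HRel.fn (ih _ _ _ (hvlift _ _ (hvlift _ _ hv))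
        (hlift _ _ _ _ _ (hlift _ _ _ _ _ hρ)))
  | con h1 h2 _ ih =>
      intro Δ ρ ρ' hv hρ
      exact HRel.con (h1.subst _ (fun n => (hv n).1)) (h2.subst _ (fun n => (hv n).2))
        (ih Δ ρ ρ' hv hρ)
  | atom => intro Δ ρ ρ' hv hρ; exact HRel.atom
  | bindv h1 h2 h3 h4 _ _ ih₁ ih₂ =>
      intro Δ ρ ρ' hv hρ
      exact HRel.bindv (h1.subst _ (fun n => (hv n).1)) (h2.subst _ (fun n => (hv n).1))
        (h3.subst _ (fun n => (hv n).2)) (h4.subst _ (fun n => (hv n).2))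
        (ih₁ Δ ρ ρ' hv hρ) (ih₂ Δ ρ ρ' hv hρ)
  | lett _ _ ih₁ ih₂ =>
      intro Δ ρ ρ' hv hρ
      exact HRel.lett (ih₁ Δ ρ ρ' hv hρ)
        (ih₂ _ _ _ (hvlift _ _ hv) (hlift _ _ _ _ _ hρ))
  | fst h1 h2 _ ih =>
      intro Δ ρ ρ' hv hρ
      exact HRel.fst (h1.subst _ (fun n => (hv n).1)) (h2.subst _ (fun n => (hv n).2))
        (ih Δ ρ ρ' hv hρ)
  | snd h1 h2 _ ih =>
      intro Δ ρ ρ' hv hρ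
      exact HRel.snd (h1.subst _ (fun n => (hv n).1)) (h2.subst _ (fun n => (hv n).2))
        (ih Δ ρ ρ' hv hρ)
  | app h1 h2 h3 h4 _ _ ih₁ ih₂ =>
      intro Δ ρ ρ' hv hρ
      exact HRel.app (h1.subst _ (fun n => (hv n).1)) (h2.subst _ (fun n => (hv n).1))
        (h3.subst _ (fun n => (hv n).2)) (h4.subst _ (fun n => (hv n).2))
        (ih₁ Δ ρ ρ' hv hρ) (ih₂ Δ ρ ρ' hv hρ)
  | case br br' h1 h2 _ _ ih ihbr =>
      intro Δ ρ ρ' hv hρ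
      exact HRel.case _ _ (h1.subst _ (fun n => (hv n).1)) (h2.subst _ (fun n => (hv n).2))
        (ih Δ ρ ρ' hv hρ)
        (fun c hc => ihbr c hc _ _ _ (hvlift _ _ hv) (hlift _ _ _ _ _ hρ))
  | fresh => intro Δ ρ ρ' hv hρ; exact HRel.fresh
  | unbind h1 h2 _ ih =>
      intro Δ ρ ρ' hv hρ
      exact HRel.unbind (h1.subst _ (fun n => (hv n).1)) (h2.subst _ (fun n => (hv n).2))
        (ih Δ ρ ρ' hv hρ)
  | obs o args args' hval hval' _ ih =>
      intro Δ ρ ρ' hv hρ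
      exact HRel.obs o _ _ (fun i => (hval i).subst _ (fun n => (hv n).1))
        (fun i => (hval' i).subst _ (fun n => (hv n).2))
        (fun i => ih i Δ ρ ρ' hv hρ)
  | base hg =>
      intro Δ ρ ρ' hv hρ
      obtain ⟨h1, h2, h3, h4, rest⟩ := hg
      simp only [Tm.subst]
      rw [Tm.subst_closed₀ h3, Tm.subst_closed₀ h4]
      exact HRel.base ⟨h1, h2, h3, h4, rest⟩
/-! ### Renaming a fresh atom through the relation -/

theorem swap_fixes {p q b : Atom} (h1 : b ≠ p) (h2 : b ≠ q) :
    Equiv.swap p q b = b := Equiv.swap_apply_of_ne_of_ne h1 h2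

theorem finset_image_swap_eq_self {F : Finset Atom} {p q : Atom}
    (hp : p ∉ F) (hq : q ∉ F) : F.image ⇑(Equiv.swap p q) = F := by
  have h : F.image ⇑(Equiv.swap p q) = F.image _root_.id := by
    apply Finset.image_congr
    intro b hb
    exact swap_fixes (fun hh => hp (hh ▸ hb)) (fun hh => hq (hh ▸ hb))
  rw [h, Finset.image_id]

theorem goodPair_rename {σ : Sig} (hequiv : ObsEquivariant σ)
    {W : Finset Atom} {x y : Atom} {u u' : Tm σ} {τ : Ty σ.D}
    (hg : GoodPair σ W x y u u' τ) {d : Atom} (hd : d ∉ W) (z : Atom) :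
    GoodPair σ (insert d W) (if x = z then d else x) (if y = z then d else y)
      (u.renameAtom z d) (u'.renameAtom z d) τ := by
  obtain ⟨hv, hv', hc, hc', ht, ht', w0, hw0, hat, H⟩ := hg
  set π := Equiv.swap z d with hπ
  have hdw0 : d ∉ w0 := fun hh => hd (hw0 hh)
  have hatx : x ∈ w0 := hat (by simp [Tm.atoms])
  have haty : y ∈ w0 := hat (by simp [Tm.atoms])
  have hatu : u.atoms ⊆ w0 := by
    intro b hb
    apply hat
    simp [Tm.atoms]
    tauto
  have hatu' : u'.atoms ⊆ w0 := by
    intro b hb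
    apply hat
    simp [Tm.atoms]
    tauto
  have hdu : d ∉ u.atoms := fun hh => hdw0 (hatu hh)
  have hdu' : d ∉ u'.atoms := fun hh => hdw0 (hatu' hh)
  have hxd : x ≠ d := fun hh => hdw0 (hh ▸ hatx)
  have hyd : y ≠ d := fun hh => hdw0 (hh ▸ haty)
  have hrx : (if x = z then d else x) = π x := by
    by_cases hxz : x = z
    · simp [hxz, hπ]
    · simp [hxz, hπ, swap_fixes hxz hxd]
  have hry : (if y = z then d else y) = π y := by
    by_cases hyz : y = z
    · simp [hyz, hπ]
    · simp [hyz, hπ, swap_fixes hyz hyd]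
  have hru : u.renameAtom z d = u.mapAtoms ⇑π := Tm.renameAtom_eq_mapAtoms_swap u (Or.inl hdu)
  have hru' : u'.renameAtom z d = u'.mapAtoms ⇑π := Tm.renameAtom_eq_mapAtoms_swap u' (Or.inl hdu')
  rw [hrx, hry, hru, hru']
  -- the new private world
  have hw0' : ∀ b ∈ w0.image ⇑π, b ∈ insert d W := by
    intro b hb
    obtain ⟨b₀, hb₀, rfl⟩ := Finset.mem_image.mp hb
    by_cases hbz : b₀ = z
    · simp [hbz, hπ]
    · have hbd : b₀ ≠ d := fun hh => hdw0 (hh ▸ hb₀)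
      rw [hπ, swap_fixes hbz hbd]
      exact Finset.mem_insert_of_mem (hw0 hb₀)
  have hd0w0' : d ∉ w0.image ⇑π → True := fun _ => trivial
  refine ⟨hv.mapA _, hv'.mapA _, Tm.closedAt_mapAtoms hc _, Tm.closedAt_mapAtoms hc' _,
    hasTy_mapAtoms ht _, hasTy_mapAtoms ht' _, w0.image ⇑π, hw0', ?_, ?_⟩
  · -- atoms of the new pair are inside the new private world
    have e1 : Tm.bindv (Tm.atom (π x)) (u.mapAtoms ⇑π)
        = (Tm.bindv (Tm.atom x) u).mapAtoms ⇑π := rfl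
    have e2 : Tm.bindv (Tm.atom (π y)) (u'.mapAtoms ⇑π)
        = (Tm.bindv (Tm.atom y) u').mapAtoms ⇑π := rfl
    rw [e1, e2, Tm.atoms_mapAtoms, Tm.atoms_mapAtoms, ← Finset.image_union]
    exact Finset.image_subset_image hat
  · -- the semantic condition
    intro e he
    obtain ⟨d₀, hd₀⟩ := Infinite.exists_notMem_finset (w0 ∪ {z, d, e})
    simp only [Finset.mem_union, Finset.mem_insert, Finset.mem_singleton, not_or] at hd₀
    obtain ⟨hd₀w, hd₀z, hd₀d, hd₀e⟩ := hd₀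
    have hd₀w0' : d₀ ∉ w0.image ⇑π := by
      intro hh
      obtain ⟨b₀, hb₀, hbe⟩ := Finset.mem_image.mp hh
      by_cases hbz : b₀ = z
      · rw [hbz, hπ] at hbe; simp at hbe; exact hd₀d hbe.symm
      · have hbd : b₀ ≠ d := fun hx => hdw0 (hx ▸ hb₀)
        rw [hπ, swap_fixes hbz hbd] at hbe
        exact hd₀w (hbe ▸ hb₀)
    have h0 := H d₀ hd₀w
    have h1 := opEq_perm hequiv π (swap_support z d) h0
    rw [Tm.mapAtoms_renameAtom _ π.injective, Tm.mapAtoms_renameAtom _ π.injective] at h1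
    have hπd₀ : π d₀ = d₀ := swap_fixes hd₀z hd₀d
    rw [hπd₀, Finset.image_insert, hπd₀] at h1
    -- now swap d₀ and e
    set π₂ := Equiv.swap d₀ e with hπ₂
    have h2 := opEq_perm hequiv π₂ (swap_support d₀ e) h1
    rw [Tm.mapAtoms_renameAtom _ π₂.injective, Tm.mapAtoms_renameAtom _ π₂.injective] at h2
    have hπ₂d₀ : π₂ d₀ = e := by simp [hπ₂]
    have hfixu : (u.mapAtoms ⇑π).mapAtoms ⇑π₂ = u.mapAtoms ⇑π := by
      apply Tm.mapAtoms_eq_self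
      intro b hb
      rw [Tm.atoms_mapAtoms] at hb
      have hbw : b ∈ w0.image ⇑π := Finset.image_subset_image hatu hb
      exact swap_fixes (fun hh => hd₀w0' (hh ▸ hbw)) (fun hh => he (hh ▸ hbw))
    have hfixu' : (u'.mapAtoms ⇑π).mapAtoms ⇑π₂ = u'.mapAtoms ⇑π := by
      apply Tm.mapAtoms_eq_self
      intro b hb
      rw [Tm.atoms_mapAtoms] at hb
      have hbw : b ∈ w0.image ⇑π := Finset.image_subset_image hatu' hb
      exact swap_fixes (fun hh => hd₀w0' (hh ▸ hbw)) (fun hh => he (hh ▸ hbw))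
    have hπ₂x : π₂ (π x) = π x := by
      have hbw : π x ∈ w0.image ⇑π := Finset.mem_image_of_mem _ hatx
      exact swap_fixes (fun hh => hd₀w0' (hh ▸ hbw)) (fun hh => he (hh ▸ hbw))
    have hπ₂y : π₂ (π y) = π y := by
      have hbw : π y ∈ w0.image ⇑π := Finset.mem_image_of_mem _ haty
      exact swap_fixes (fun hh => hd₀w0' (hh ▸ hbw)) (fun hh => he (hh ▸ hbw))
    rw [hfixu, hfixu', hπ₂x, hπ₂y, hπ₂d₀, Finset.image_insert, hπ₂d₀,
      finset_image_swap_eq_self hd₀w0' he] at h2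
    exact h2

theorem hrel_rename {σ : Sig} (hequiv : ObsEquivariant σ) {W Γ} {t t' : Tm σ} {τ}
    (h : HRel σ W Γ t t' τ) {d : Atom} (hd : d ∉ W) (z : Atom) :
    HRel σ (insert d W) Γ (t.renameAtom z d) (t'.renameAtom z d) τ := by
  induction h with
  | var Γ n τ hn => exact HRel.var Γ n τ hn
  | unit => exact HRel.unit
  | pair h1 h2 h3 h4 _ _ ih₁ ih₂ =>
      exact HRel.pair (h1.renameAtom' z d) (h2.renameAtom' z d) (h3.renameAtom' z d)
        (h4.renameAtom' z d) ih₁ ih₂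
  | fn _ ih => exact HRel.fn ih
  | con h1 h2 _ ih =>
      exact HRel.con (h1.renameAtom' z d) (h2.renameAtom' z d) ih
  | atom => simp only [Tm.renameAtom_atom]; exact HRel.atom
  | bindv h1 h2 h3 h4 _ _ ih₁ ih₂ =>
      exact HRel.bindv (h1.renameAtom' z d) (h2.renameAtom' z d) (h3.renameAtom' z d)
        (h4.renameAtom' z d) ih₁ ih₂
  | lett _ _ ih₁ ih₂ => exact HRel.lett ih₁ ih₂
  | fst h1 h2 _ ih => exact HRel.fst (h1.renameAtom' z d) (h2.renameAtom' z d) ih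
  | snd h1 h2 _ ih => exact HRel.snd (h1.renameAtom' z d) (h2.renameAtom' z d) ih
  | app h1 h2 h3 h4 _ _ ih₁ ih₂ =>
      exact HRel.app (h1.renameAtom' z d) (h2.renameAtom' z d) (h3.renameAtom' z d)
        (h4.renameAtom' z d) ih₁ ih₂
  | case br br' h1 h2 _ _ ih ihbr =>
      exact HRel.case _ _ (h1.renameAtom' z d) (h2.renameAtom' z d) ih (fun c hc => ihbr c hc)
  | fresh => exact HRel.fresh
  | unbind h1 h2 _ ih => exact HRel.unbind (h1.renameAtom' z d) (h2.renameAtom' z d) ih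
  | obs o args args' hv hv' _ ih =>
      exact HRel.obs o _ _ (fun i => (hv i).renameAtom' z d) (fun i => (hv' i).renameAtom' z d) ih
  | base hg =>
      simp only [Tm.renameAtom_bindv, Tm.renameAtom_atom]
      exact HRel.base (goodPair_rename hequiv hg hd z)
/-! ### Stack relation lemmas and the simulation -/

theorem stkR_hasTy {σ : Sig} {W} {S S' : Stk σ} {τ τ'} (h : StkR σ W S S' τ τ') :
    HasTyStk σ [] S τ τ' ∧ HasTyStk σ [] S' τ τ' := by
  induction h with
  | id => exact ⟨HasTyStk.id, HasTyStk.id⟩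
  | cons he _ ih =>
      exact ⟨HasTyStk.cons (hrel_hasTy he).1 ih.1, HasTyStk.cons (hrel_hasTy he).2 ih.2⟩

theorem stkR_mono {σ : Sig} {W W'} {S S' : Stk σ} {τ τ'} (h : StkR σ W S S' τ τ')
    (hW : W ⊆ W') : StkR σ W' S S' τ τ' := by
  induction h with
  | id => exact StkR.id
  | cons he _ ih => exact StkR.cons (hrel_mono he hW) ih

theorem stkR_refl {σ : Sig} {W} {S : Stk σ} {τ τ'} (h : HasTyStk σ [] S τ τ') :
    StkR σ W S S τ τ' := by
  generalize hΓ : ([] : List (Ty σ.D)) = Γ at h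
  induction h with
  | id => exact StkR.id
  | cons he _ ih =>
      subst hΓ
      exact StkR.cons (hrel_refl he) (ih rfl)

theorem hrel_atom_inv {σ : Sig} {W Γ} {b : Atom} {t' : Tm σ} {τ}
    (h : HRel σ W Γ (Tm.atom b) t' τ) : t' = Tm.atom b := by
  cases h
  rfl

theorem toFinset_append_singleton (s : List Atom) (d : Atom) :
    (s ++ [d]).toFinset = insert d s.toFinset := by
  ext a
  simp [or_comm]

theorem stk_atoms_cons {σ : Sig} (S : Stk σ) (e : Tm σ) :
    (Stk.cons S e).atoms = S.atoms ∪ e.atoms := rfl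

theorem sim {σ : Sig} (hequiv : ObsEquivariant σ) :
    ∀ (n : ℕ) (s : List Atom) (S₁ S₂ : Stk σ) (e₁ e₂ : Tm σ) (τ₀ τ' : Ty σ.D),
      s.Nodup →
      S₁.atoms ⊆ s.toFinset → e₁.atoms ⊆ s.toFinset →
      S₂.atoms ⊆ s.toFinset → e₂.atoms ⊆ s.toFinset →
      StkR σ s.toFinset S₁ S₂ τ₀ τ' →
      HRel σ s.toFinset [] e₁ e₂ τ₀ →
      TermN σ ⟨s, S₁, e₁⟩ n → Term σ ⟨s, S₂, e₂⟩ := by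
  intro n
  induction n using Nat.strong_induction_on with
  | _ n IH =>
  intro s S₁ S₂ e₁ e₂ τ₀ τ' hnd hatS₁ hate₁ hatS₂ hate₂ hstk hrel hterm
  cases hterm with
  | val hv =>
      -- S₁ = Id, e₁ a value
      cases hstk with
      | id => exact ⟨0, TermN.val (hrel_isVal hrel hv)⟩
  | step hst htm =>
      rename_i m
      cases hst with
      | pop hv =>
          rename_i S₁' f₁
          cases hstk with
          | cons hf hS =>
              rename_i f₂ τ₁ S₂'
              have hv₂ : IsVal e₂ := hrel_isVal hrel hv
              have hss : HRel σ s.toFinset [] (f₁.subst1 e₁) (f₂.subst1 e₂) τ₁ := by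
                apply hrel_subst hf []
                · intro k
                  match k with
                  | 0 => exact ⟨hv, hv₂⟩
                  | k + 1 => exact ⟨IsVal.var, IsVal.var⟩
                · intro k τ'' hk
                  match k with
                  | 0 =>
                      simp only [List.getElem?_cons_zero, Option.some_inj] at hk
                      exact hk ▸ hrel
                  | k + 1 => simp at hk
              have hT := IH m (Nat.lt_succ_self m) s S₁' S₂' _ _ τ₁ τ' hnd
                (fun b hb => hatS₁ (by simp [stk_atoms_cons]; tauto))
                (fun b hb => by
                  rcases Finset.mem_union.mp (Tm.atoms_subst1 f₁ e₁ hb) with hh | hh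
                  · exact hatS₁ (by simp [stk_atoms_cons]; tauto)
                  · exact hate₁ hh)
                (fun b hb => hatS₂ (by simp [stk_atoms_cons]; tauto))
                (fun b hb => by
                  rcases Finset.mem_union.mp (Tm.atoms_subst1 f₂ e₂ hb) with hh | hh
                  · exact hatS₂ (by simp [stk_atoms_cons]; tauto)
                  · exact hate₂ hh)
                hS hss htm
              exact (term_cons_iff hv₂).mpr hT
      | lett =>
          rename_i a₁ b₁
          cases hrel with
          | lett ha hb =>
              rename_i a₂ τ₁ b₂
              have hT := IH m (Nat.lt_succ_self m) s (Stk.cons S₁ b₁) (Stk.cons S₂ b₂)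
                a₁ a₂ τ₁ τ' hnd
                (by
                  rw [stk_atoms_cons]
                  apply Finset.union_subset hatS₁
                  exact fun b hb => hate₁ (by simp [Tm.atoms]; tauto))
                (fun b hb => hate₁ (by simp [Tm.atoms]; tauto))
                (by
                  rw [stk_atoms_cons]
                  apply Finset.union_subset hatS₂
                  exact fun b hb => hate₂ (by simp [Tm.atoms]; tauto))
                (fun b hb => hate₂ (by simp [Tm.atoms]; tauto))
                (StkR.cons hb hstk) ha htm
              obtain ⟨k, hk⟩ := hT
              exact ⟨k + 1, TermN.step Step.lett hk⟩
      | case br hv =>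
          rename_i vv c
          cases hrel with
          | case _ br' hv1 hv2 hsc hbr =>
              cases hsc with
              | con hcv1 hcv2 harg =>
                  rename_i vv'
                  have hbrc := hbr c rfl
                  have hss : HRel σ s.toFinset [] ((br c).subst1 vv) ((br' c).subst1 vv') τ₀ := by
                    apply hrel_subst hbrc []
                    · intro k
                      match k with
                      | 0 => exact ⟨hcv1, hcv2⟩
                      | k + 1 => exact ⟨IsVal.var, IsVal.var⟩
                    · intro k τ'' hk
                      match k with
                      | 0 =>
                          simp only [List.getElem?_cons_zero, Option.some_inj] at hk
                          exact hk ▸ harg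
                      | k + 1 => simp at hk
                  have hT := IH m (Nat.lt_succ_self m) s S₁ S₂ _ _ τ₀ τ' hnd hatS₁
                    (fun b hb => by
                      rcases Finset.mem_union.mp (Tm.atoms_subst1 (br c) vv hb) with hh | hh
                      · exact hate₁ (by
                          simp only [Tm.atoms, Finset.mem_union]
                          exact Or.inr (Finset.mem_biUnion.mpr ⟨c, Finset.mem_univ c, hh⟩))
                      · exact hate₁ (by
                          simp only [Tm.atoms, Finset.mem_union]
                          exact Or.inl hh))
                    hatS₂
                    (fun b hb => by
                      rcases Finset.mem_union.mp (Tm.atoms_subst1 (br' c) vv' hb) with hh | hh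
                      · exact hate₂ (by
                          simp only [Tm.atoms, Finset.mem_union]
                          exact Or.inr (Finset.mem_biUnion.mpr ⟨c, Finset.mem_univ c, hh⟩))
                      · exact hate₂ (by
                          simp only [Tm.atoms, Finset.mem_union]
                          exact Or.inl hh))
                    hstk hss htm
                  obtain ⟨k, hk⟩ := hT
                  exact ⟨k + 1, TermN.step (Step.case br' hcv2) hk⟩
      | fst hv1 hv2 =>
          cases hrel with
          | fst hp1 hp2 hp =>
              cases hp with
              | pair hq1 hq2 hq3 hq4 h₁ h₂ =>
                  have hT := IH m (Nat.lt_succ_self m) s S₁ S₂ _ _ τ₀ τ' hnd hatS₁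
                    (fun b hb => hate₁ (by simp [Tm.atoms]; tauto))
                    hatS₂
                    (fun b hb => hate₂ (by simp [Tm.atoms]; tauto))
                    hstk h₁ htm
                  obtain ⟨k, hk⟩ := hT
                  exact ⟨k + 1, TermN.step (Step.fst hq3 hq4) hk⟩
      | snd hv1 hv2 =>
          cases hrel with
          | snd hp1 hp2 hp =>
              cases hp with
              | pair hq1 hq2 hq3 hq4 h₁ h₂ =>
                  have hT := IH m (Nat.lt_succ_self m) s S₁ S₂ _ _ τ₀ τ' hnd hatS₁
                    (fun b hb => hate₁ (by simp [Tm.atoms]; tauto))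
                    hatS₂
                    (fun b hb => hate₂ (by simp [Tm.atoms]; tauto))
                    hstk h₂ htm
                  obtain ⟨k, hk⟩ := hT
                  exact ⟨k + 1, TermN.step (Step.snd hq3 hq4) hk⟩
      | app hv =>
          rename_i vv e
          cases hrel with
          | app ha1 ha2 ha3 ha4 hf hv' =>
              rename_i ffn v₂' τa
              cases hf with
              | fn he =>
                  rename_i e'
                  have hss : HRel σ s.toFinset [] (e.subst2 vv (Tm.fn e))
                      (e'.subst2 v₂' (Tm.fn e')) τ₀ := by
                    apply hrel_subst he []
                    · intro k
                      match k with
                      | 0 => exact ⟨ha2, ha4⟩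
                      | 1 => exact ⟨IsVal.fn, IsVal.fn⟩
                      | k + 2 => exact ⟨IsVal.var, IsVal.var⟩
                    · intro k τ'' hk
                      match k with
                      | 0 =>
                          simp only [List.getElem?_cons_zero, Option.some_inj] at hk
                          exact hk ▸ hv'
                      | 1 =>
                          simp only [List.getElem?_cons_succ,
                            List.getElem?_cons_zero, Option.some_inj] at hk
                          exact hk ▸ HRel.fn he
                      | k + 2 => simp at hk
                  have hT := IH m (Nat.lt_succ_self m) s S₁ S₂ _ _ τ₀ τ' hnd hatS₁
                    (fun b hb => by
                      rcases Finset.mem_union.mp (Tm.atoms_subst2 e vv (Tm.fn e) hb) with hh | hh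
                      · exact hate₁ (by simp [Tm.atoms]; tauto)
                      · rcases Finset.mem_union.mp hh with hh | hh
                        · exact hate₁ (by simp [Tm.atoms]; tauto)
                        · exact hate₁ (by
                            simp only [Tm.atoms] at hh ⊢
                            simp [hh]))
                    hatS₂
                    (fun b hb => by
                      rcases Finset.mem_union.mp (Tm.atoms_subst2 e' v₂' (Tm.fn e') hb) with hh | hh
                      · exact hate₂ (by simp [Tm.atoms]; tauto)
                      · rcases Finset.mem_union.mp hh with hh | hh
                        · exact hate₂ (by simp [Tm.atoms]; tauto)
                        · exact hate₂ (by
                            simp only [Tm.atoms] at hh ⊢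
                            simp [hh]))
                    hstk hss htm
                  obtain ⟨k, hk⟩ := hT
                  exact ⟨k + 1, TermN.step (Step.app ha4) hk⟩
      | fresh hd =>
          rename_i d
          cases hrel with
          | fresh =>
              have hW := toFinset_append_singleton s d
              have hsub : s.toFinset ⊆ (s ++ [d]).toFinset := by
                rw [hW]; exact Finset.subset_insert d _
              have hT := IH m (Nat.lt_succ_self m) (s ++ [d]) S₁ S₂
                (Tm.atom d) (Tm.atom d) Ty.atm τ'
                (by simp [List.nodup_append]; exact ⟨hnd, fun b hb hbe => hd (hbe ▸ hb)⟩)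
                (hatS₁.trans hsub)
                (by rw [hW]; intro b hb; simp [Tm.atoms] at hb; simp [hb])
                (hatS₂.trans hsub)
                (by rw [hW]; intro b hb; simp [Tm.atoms] at hb; simp [hb])
                (stkR_mono hstk hsub) HRel.atom htm
              obtain ⟨k, hk⟩ := hT
              exact ⟨k + 1, TermN.step (Step.fresh hd) hk⟩
      | unbind hd hvu =>
          rename_i d u₁ z
          have hW := toFinset_append_singleton s d
          have hdW : d ∉ s.toFinset := by simpa using hd
          have hsub : s.toFinset ⊆ (s ++ [d]).toFinset := by
            rw [hW]; exact Finset.subset_insert d _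
          have hnd' : (s ++ [d]).Nodup := by simp [List.nodup_append]; exact ⟨hnd, fun b hb hbe => hd (hbe ▸ hb)⟩
          cases hrel with
          | unbind hu1 hu2 hb =>
              rename_i V₂ τt
              cases hb with
              | bindv hb1 hb2 hb3 hb4 hba hbu =>
                  rename_i w₁ u₂
                  have hw₁ := hrel_atom_inv hba
                  subst hw₁
                  have hrp : HRel σ (s ++ [d]).toFinset []
                      (Tm.pair (Tm.atom d) (u₁.renameAtom z d))
                      (Tm.pair (Tm.atom d) (u₂.renameAtom z d)) (Ty.prod Ty.atm τt) := by
                    rw [hW]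
                    exact HRel.pair IsVal.atom (hb2.renameAtom' z d) IsVal.atom
                      (hb4.renameAtom' z d) HRel.atom (hrel_rename hequiv hbu hdW z)
                  have hT := IH m (Nat.lt_succ_self m) (s ++ [d]) S₁ S₂ _ _
                    (Ty.prod Ty.atm τt) τ' hnd'
                    (hatS₁.trans hsub)
                    (by
                      rw [hW]
                      intro b hb
                      simp only [Tm.atoms, Finset.mem_union, Finset.mem_singleton] at hb
                      rcases hb with hb | hb
                      · simp [hb]
                      · rcases Finset.mem_insert.mp (Tm.atoms_renameAtom_subset u₁ z d hb) with hb | hb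
                        · simp [hb]
                        · exact Finset.mem_insert_of_mem (hate₁ (by simp [Tm.atoms]; tauto)))
                    (hatS₂.trans hsub)
                    (by
                      rw [hW]
                      intro b hb
                      simp only [Tm.atoms, Finset.mem_union, Finset.mem_singleton] at hb
                      rcases hb with hb | hb
                      · simp [hb]
                      · rcases Finset.mem_insert.mp (Tm.atoms_renameAtom_subset u₂ z d hb) with hb | hb
                        · simp [hb]
                        · exact Finset.mem_insert_of_mem (hate₂ (by simp [Tm.atoms]; tauto)))
                    (stkR_mono hstk hsub) hrp htm
                  obtain ⟨k, hk⟩ := hT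
                  exact ⟨k + 1, TermN.step (Step.unbind hd hb4) hk⟩
              | base hg =>
                  rename_i y u'
                  obtain ⟨hgv, hgv', hgc, hgc', hgt, hgt', w0, hw0, hat0, H⟩ := hg
                  -- the first component: replace the stack, keeping the focus
                  have htP₁ : HasTy σ [] (Tm.pair (Tm.atom d) (u₁.renameAtom z d))
                      (Ty.prod Ty.atm τt) :=
                    HasTy.pair IsVal.atom (hgv.renameAtom' z d) HasTy.atom
                      (hasTy_renameAtom hgt z d)
                  have hatu₁ : u₁.atoms ⊆ s.toFinset :=
                    fun b hb => hate₁ (by simp [Tm.atoms]; tauto)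
                  have hatu' : u'.atoms ⊆ s.toFinset :=
                    fun b hb => hate₂ (by simp [Tm.atoms]; tauto)
                  have hatP₁ : (Tm.pair (Tm.atom d) (u₁.renameAtom z d)).atoms
                      ⊆ (s ++ [d]).toFinset := by
                    rw [hW]
                    intro b hb
                    simp only [Tm.atoms, Finset.mem_union, Finset.mem_singleton] at hb
                    rcases hb with hb | hb
                    · simp [hb]
                    · rcases Finset.mem_insert.mp (Tm.atoms_renameAtom_subset u₁ z d hb) with hb | hb
                      · simp [hb]
                      · exact Finset.mem_insert_of_mem (hatu₁ hb)
                  have hT := IH m (Nat.lt_succ_self m) (s ++ [d]) S₁ S₂ _ _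
                    (Ty.prod Ty.atm τt) τ' hnd'
                    (hatS₁.trans hsub) hatP₁ (hatS₂.trans hsub) hatP₁
                    (stkR_mono hstk hsub) (hrel_refl htP₁) htm
                  -- now switch the focus using the semantic property of the good pair
                  have hdw0 : d ∉ w0 := fun hh => hdW (hw0 hh)
                  have hOp := H d hdw0
                  set S₂' := Stk.cons S₂ (Tm.pair (Tm.atom d) (Tm.var 0)) with hS₂'
                  have hsubst1 : ∀ uu : Tm σ,
                      (Tm.pair (Tm.atom d) (Tm.var 0)).subst1 uu = Tm.pair (Tm.atom d) uu :=
                    fun uu => rfl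
                  have htyS₂' : HasTyStk σ [] S₂' τt τ' := by
                    apply HasTyStk.cons
                    · exact HasTy.pair IsVal.atom IsVal.var HasTy.atom
                        (HasTy.var [τt] 0 τt (by simp))
                    · exact (stkR_hasTy hstk).2
                  have hstS₂' : S₂'.atoms ⊆ (s ++ [d]).toFinset := by
                    rw [hS₂', stk_atoms_cons, hW]
                    apply Finset.union_subset
                    · exact hatS₂.trans (Finset.subset_insert d _)
                    · intro b hb
                      simp only [Tm.atoms, Finset.mem_union, Finset.mem_singleton,
                        Finset.notMem_empty, or_false] at hb
                      simp [hb]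
                  have hOpMain := hOp.2.2.2 (s ++ [d]) S₂' τ' hnd'
                    (by
                      apply Finset.union_subset
                      · rw [hW]
                        intro b hb
                        rcases Finset.mem_insert.mp hb with hb | hb
                        · simp [hb]
                        · exact Finset.mem_insert_of_mem (hw0 hb)
                      · exact hstS₂')
                    htyS₂'
                  -- chain
                  have h1 : Term σ ⟨s ++ [d], S₂', u₁.renameAtom z d⟩ := by
                    rw [show (⟨s ++ [d], S₂', u₁.renameAtom z d⟩ : Config σ)
                      = ⟨s ++ [d], Stk.cons S₂ (Tm.pair (Tm.atom d) (Tm.var 0)),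
                        u₁.renameAtom z d⟩ from rfl]
                    rw [term_cons_iff (hgv.renameAtom' z d), hsubst1]
                    exact hT
                  have h2 : Term σ ⟨s ++ [d], S₂', u'.renameAtom y d⟩ := hOpMain.mp h1
                  have h3 : Term σ ⟨s ++ [d], S₂, Tm.pair (Tm.atom d) (u'.renameAtom y d)⟩ := by
                    rw [← hsubst1]
                    exact (term_cons_iff (hgv'.renameAtom' y d)).mp h2
                  obtain ⟨k, hk⟩ := h3
                  exact ⟨k + 1, TermN.step (Step.unbind hd hgv') hk⟩
      | obs o as hmem =>
          cases hrel with
          | obs _ _ args' hv1 hv2 hargs =>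
              have hargs' : args' = fun i => Tm.atom (as i) := by
                funext i
                exact hrel_atom_inv (hargs i)
              subst hargs'
              have hrn : HRel σ s.toFinset []
                  (numeral σ (σ.obsVal o s (List.ofFn as)))
                  (numeral σ (σ.obsVal o s (List.ofFn as))) (Ty.data σ.natD) :=
                hrel_refl (numeral_hasTy _)
              have hT := IH m (Nat.lt_succ_self m) s S₁ S₂ _ _
                (Ty.data σ.natD) τ' hnd hatS₁
                (by rw [numeral_atoms]; exact Finset.empty_subset _)
                hatS₂
                (by rw [numeral_atoms]; exact Finset.empty_subset _)
                hstk hrn htm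
              obtain ⟨k, hk⟩ := hT
              exact ⟨k + 1, TermN.step (Step.obs o as hmem) hk⟩
/-! ### Adequacy and stripping -/

theorem hrel_opEq {σ : Sig} (hequiv : ObsEquivariant σ) {w : Finset Atom}
    {e e' : Tm σ} {τ : Ty σ.D} (h : HRel σ w [] e e' τ)
    (hat : e.atoms ∪ e'.atoms ⊆ w) : OpEq σ w e e' τ := by
  refine ⟨hat, (hrel_hasTy h).1, (hrel_hasTy h).2, ?_⟩
  intro s S τ' hnd hsub hty
  have hws : w ⊆ s.toFinset := fun b hb => hsub (Finset.mem_union_left _ hb)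
  have hSs : S.atoms ⊆ s.toFinset := fun b hb => hsub (Finset.mem_union_right _ hb)
  have hes : e.atoms ⊆ s.toFinset := fun b hb => hws (hat (Finset.mem_union_left _ hb))
  have hes' : e'.atoms ⊆ s.toFinset := fun b hb => hws (hat (Finset.mem_union_right _ hb))
  constructor
  · rintro ⟨n, hn⟩
    exact sim hequiv n s S S e e' τ τ' hnd hSs hes hSs hes'
      (stkR_refl hty) (hrel_mono h hws) hn
  · rintro ⟨n, hn⟩
    exact sim hequiv n s S S e' e τ τ' hnd hSs hes' hSs hes
      (stkR_refl hty) (hrel_mono (hrel_symm h) hws) hn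

theorem strip {σ : Sig} {Γ : List (Ty σ.D)} {t : Tm σ} {τ : Ty σ.D}
    (h : HasTy σ Γ t τ) (W : Finset Atom) :
    ∃ t' : Tm σ, HRel σ W Γ t t' τ ∧ Tm.ClosedAt Γ.length t' ∧ t'.atoms ⊆ t.atoms := by
  classical
  induction h with
  | var Γ n τ hn =>
      exact ⟨Tm.var n, HRel.var Γ n τ hn, (List.getElem?_eq_some_iff.mp hn).1,
        by simp [Tm.atoms]⟩
  | unit => exact ⟨Tm.unit, HRel.unit, trivial, by simp [Tm.atoms]⟩
  | pair hv₁ hv₂ h₁ h₂ ih₁ ih₂ =>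
      obtain ⟨t₁, hr₁, hc₁, ha₁⟩ := ih₁
      obtain ⟨t₂, hr₂, hc₂, ha₂⟩ := ih₂
      refine ⟨Tm.pair t₁ t₂, HRel.pair hv₁ hv₂ (hrel_isVal hr₁ hv₁) (hrel_isVal hr₂ hv₂)
        hr₁ hr₂, ⟨hc₁, hc₂⟩, ?_⟩
      simp only [Tm.atoms]
      exact Finset.union_subset_union ha₁ ha₂
  | fn h ih =>
      obtain ⟨t', hr, hc, ha⟩ := ih
      exact ⟨Tm.fn t', HRel.fn hr, hc, by simpa [Tm.atoms] using ha⟩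
  | con hv h ih =>
      obtain ⟨t', hr, hc, ha⟩ := ih
      exact ⟨Tm.con _ t', HRel.con hv (hrel_isVal hr hv) hr, hc,
        by simpa [Tm.atoms] using ha⟩
  | atom => exact ⟨Tm.atom _, HRel.atom, trivial, by simp [Tm.atoms]⟩
  | bindv hv₁ hv₂ h₁ h₂ ih₁ ih₂ =>
      obtain ⟨t₁, hr₁, hc₁, ha₁⟩ := ih₁
      obtain ⟨t₂, hr₂, hc₂, ha₂⟩ := ih₂
      refine ⟨Tm.bindv t₁ t₂, HRel.bindv hv₁ hv₂ (hrel_isVal hr₁ hv₁) (hrel_isVal hr₂ hv₂)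
        hr₁ hr₂, ⟨hc₁, hc₂⟩, ?_⟩
      simp only [Tm.atoms]
      exact Finset.union_subset_union ha₁ ha₂
  | lett h₁ h₂ ih₁ ih₂ =>
      obtain ⟨t₁, hr₁, hc₁, ha₁⟩ := ih₁
      obtain ⟨t₂, hr₂, hc₂, ha₂⟩ := ih₂
      refine ⟨Tm.lett t₁ t₂, HRel.lett hr₁ hr₂, ⟨hc₁, hc₂⟩, ?_⟩
      simp only [Tm.atoms]
      exact Finset.union_subset_union ha₁ ha₂
  | fst hv h ih =>
      obtain ⟨t', hr, hc, ha⟩ := ih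
      exact ⟨Tm.fst t', HRel.fst hv (hrel_isVal hr hv) hr, hc,
        by simpa [Tm.atoms] using ha⟩
  | snd hv h ih =>
      obtain ⟨t', hr, hc, ha⟩ := ih
      exact ⟨Tm.snd t', HRel.snd hv (hrel_isVal hr hv) hr, hc,
        by simpa [Tm.atoms] using ha⟩
  | app hv₁ hv₂ h₁ h₂ ih₁ ih₂ =>
      obtain ⟨t₁, hr₁, hc₁, ha₁⟩ := ih₁
      obtain ⟨t₂, hr₂, hc₂, ha₂⟩ := ih₂
      refine ⟨Tm.app t₁ t₂, HRel.app hv₁ hv₂ (hrel_isVal hr₁ hv₁) (hrel_isVal hr₂ hv₂)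
        hr₁ hr₂, ⟨hc₁, hc₂⟩, ?_⟩
      simp only [Tm.atoms]
      exact Finset.union_subset_union ha₁ ha₂
  | case br hv hsc hbr ihsc ihbr =>
      rename_i v Γ δ τ
      obtain ⟨v', hrv, hcv, hav⟩ := ihsc
      choose g hg using ihbr
      refine ⟨Tm.case v' (fun c => if hc : σ.resTy c = δ then g c hc else Tm.unit),
        HRel.case br _ hv (hrel_isVal hrv hv) hrv ?_, ⟨hcv, ?_⟩, ?_⟩
      · intro c hc
        simp only [dif_pos hc]
        exact (hg c hc).1
      · intro c
        by_cases hc : σ.resTy c = δ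
        · simp only [dif_pos hc]
          exact (hg c hc).2.1
        · simp only [dif_neg hc]
          trivial
      · simp only [Tm.atoms]
        apply Finset.union_subset
        · exact hav.trans (by intro b hb; simp [Tm.atoms]; tauto)
        · intro b hb
          simp only [Finset.mem_biUnion, Finset.mem_univ, true_and] at hb
          obtain ⟨c, hc⟩ := hb
          by_cases hrc : σ.resTy c = δ
          · rw [dif_pos hrc] at hc
            have := (hg c hrc).2.2 hc
            simp only [Tm.atoms, Finset.mem_union]
            exact Or.inr (Finset.mem_biUnion.mpr ⟨c, Finset.mem_univ c, this⟩)
          · rw [dif_neg hrc] at hc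
            simp [Tm.atoms] at hc
  | fresh => exact ⟨Tm.fresh, HRel.fresh, trivial, by simp [Tm.atoms]⟩
  | unbind hv h ih =>
      obtain ⟨t', hr, hc, ha⟩ := ih
      exact ⟨Tm.unbind t', HRel.unbind hv (hrel_isVal hr hv) hr, hc,
        by simpa [Tm.atoms] using ha⟩
  | obs o args hv h ih =>
      choose f hf using ih
      refine ⟨Tm.obs o f, HRel.obs o args f hv (fun i => hrel_isVal (hf i).1 (hv i))
        (fun i => (hf i).1), fun i => (hf i).2.1, ?_⟩
      simp only [Tm.atoms]
      intro b hb
      simp only [Finset.mem_biUnion, Finset.mem_univ, true_and] at hb ⊢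
      obtain ⟨i, hi⟩ := hb
      exact ⟨i, (hf i).2.2 hi⟩
/-- Proposition: extensionality for atom-binding, first half. -/
theorem ext_bind_1 (σ : Sig) (hequiv : ObsEquivariant σ)
    (τ : Ty σ.D) (w : Finset Atom) (a a' : Atom) (v v' : Tm σ)
    (hv : IsVal v) (hv' : IsVal v')
    (hw : insert a (insert a' (v.atoms ∪ v'.atoms)) ⊆ w)
    (ht : HasTy σ [] (Tm.bindv (Tm.atom a) v) (Ty.bnd τ))
    (ht' : HasTy σ [] (Tm.bindv (Tm.atom a') v') (Ty.bnd τ))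
    (a'' : Atom) (ha'' : a'' ∉ w)
    (h : OpEq σ (insert a'' w) (v.renameAtom a a'') (v'.renameAtom a' a'') τ) :
    OpEq σ w (Tm.bindv (Tm.atom a) v) (Tm.bindv (Tm.atom a') v') (Ty.bnd τ) := by
  have haw : a ∈ w := hw (by simp)
  have ha'w : a' ∈ w := hw (by simp)
  have hvw : v.atoms ⊆ w := fun b hb => hw (by simp; tauto)
  have hv'w : v'.atoms ⊆ w := fun b hb => hw (by simp; tauto)
  have htv : HasTy σ [] v τ := by cases ht with | bindv _ _ _ h4 => exact h4
  have htv' : HasTy σ [] v' τ := by cases ht' with | bindv _ _ _ h4 => exact h4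
  obtain ⟨vh, hrv, hcv, hav⟩ := strip htv w
  obtain ⟨vh', hrv', hcv', hav'⟩ := strip htv' w
  have hvvh : IsVal vh := hrel_isVal hrv hv
  have hvvh' : IsVal vh' := hrel_isVal hrv' hv'
  have htvh : HasTy σ [] vh τ := (hrel_hasTy hrv).2
  have htvh' : HasTy σ [] vh' τ := (hrel_hasTy hrv').2
  have havw : vh.atoms ⊆ w := hav.trans hvw
  have hav'w : vh'.atoms ⊆ w := hav'.trans hv'w
  have haa'' : a ≠ a'' := fun hh => ha'' (hh ▸ haw)
  have ha'a'' : a' ≠ a'' := fun hh => ha'' (hh ▸ ha'w)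
  -- transport the hypothesis to an arbitrary fresh atom
  have hD : ∀ d, d ∉ w →
      OpEq σ (insert d w) (v.renameAtom a d) (v'.renameAtom a' d) τ := by
    intro d hd
    set π := Equiv.swap a'' d with hπ
    have h2 := opEq_perm hequiv π (swap_support a'' d) h
    have himg : (insert a'' w).image ⇑π = insert d w := by
      rw [Finset.image_insert, Equiv.swap_apply_left, finset_image_swap_eq_self ha'' hd]
    have hga : π a = a :=
      swap_fixes haa'' (fun hh => hd (hh ▸ haw))
    have hga' : π a' = a' :=
      swap_fixes ha'a'' (fun hh => hd (hh ▸ ha'w))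
    have hπa'' : π a'' = d := Equiv.swap_apply_left a'' d
    have hvfix : v.mapAtoms ⇑π = v := by
      apply Tm.mapAtoms_eq_self
      intro b hb
      exact swap_fixes (fun hh => ha'' (hh ▸ hvw hb)) (fun hh => hd (hh ▸ hvw hb))
    have hv'fix : v'.mapAtoms ⇑π = v' := by
      apply Tm.mapAtoms_eq_self
      intro b hb
      exact swap_fixes (fun hh => ha'' (hh ▸ hv'w hb)) (fun hh => hd (hh ▸ hv'w hb))
    rw [Tm.mapAtoms_renameAtom _ π.injective, Tm.mapAtoms_renameAtom _ π.injective,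
      himg, hga, hga', hπa'', hvfix, hv'fix] at h2
    exact h2
  -- the good pair
  have hg : GoodPair σ w a a' vh vh' τ := by
    refine ⟨hvvh, hvvh', hcv, hcv', htvh, htvh', w, Finset.Subset.refl w, ?_, ?_⟩
    · intro b hb
      simp only [Tm.atoms, Finset.mem_union, Finset.mem_singleton] at hb
      rcases hb with (hb | hb) | (hb | hb)
      · exact hb ▸ haw
      · exact havw hb
      · exact hb ▸ ha'w
      · exact hav'w hb
    · intro d hd
      have E₁ := hrel_rename hequiv hrv hd a
      have E₂ := hrel_rename hequiv hrv' hd a'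
      have hE₁ : OpEq σ (insert d w) (v.renameAtom a d) (vh.renameAtom a d) τ := by
        apply hrel_opEq hequiv E₁
        apply Finset.union_subset
        · exact (Tm.atoms_renameAtom_subset v a d).trans (Finset.insert_subset_insert d hvw)
        · exact (Tm.atoms_renameAtom_subset vh a d).trans (Finset.insert_subset_insert d havw)
      have hE₂ : OpEq σ (insert d w) (v'.renameAtom a' d) (vh'.renameAtom a' d) τ := by
        apply hrel_opEq hequiv E₂
        apply Finset.union_subset
        · exact (Tm.atoms_renameAtom_subset v' a' d).trans (Finset.insert_subset_insert d hv'w)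
        · exact (Tm.atoms_renameAtom_subset vh' a' d).trans (Finset.insert_subset_insert d hav'w)
      exact opEq_trans (opEq_symm hE₁) (opEq_trans (hD d hd) hE₂)
  have hsubw : ∀ (x : Atom) (u uu : Tm σ), x ∈ w → u.atoms ⊆ w → uu.atoms ⊆ w →
      (Tm.bindv (Tm.atom x) u).atoms ∪ (Tm.bindv (Tm.atom x) uu).atoms ⊆ w := by
    intro x u uu hx hu huu b hb
    simp only [Tm.atoms, Finset.mem_union, Finset.mem_singleton] at hb
    rcases hb with (hb | hb) | (hb | hb)
    · exact hb ▸ hx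
    · exact hu hb
    · exact hb ▸ hx
    · exact huu hb
  have O₁ : OpEq σ w (Tm.bindv (Tm.atom a) v) (Tm.bindv (Tm.atom a) vh) (Ty.bnd τ) :=
    hrel_opEq hequiv (HRel.bindv IsVal.atom hv IsVal.atom hvvh HRel.atom hrv)
      (hsubw a v vh haw hvw havw)
  have O₂ : OpEq σ w (Tm.bindv (Tm.atom a) vh) (Tm.bindv (Tm.atom a') vh') (Ty.bnd τ) := by
    apply hrel_opEq hequiv (HRel.base hg)
    intro b hb
    simp only [Tm.atoms, Finset.mem_union, Finset.mem_singleton] at hb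
    rcases hb with (hb | hb) | (hb | hb)
    · exact hb ▸ haw
    · exact havw hb
    · exact hb ▸ ha'w
    · exact hav'w hb
  have O₃ : OpEq σ w (Tm.bindv (Tm.atom a') v') (Tm.bindv (Tm.atom a') vh') (Ty.bnd τ) :=
    hrel_opEq hequiv (HRel.bindv IsVal.atom hv' IsVal.atom hvvh' HRel.atom hrv')
      (hsubw a' v' vh' ha'w hv'w hav'w)
  exact opEq_trans O₁ (opEq_trans O₂ (opEq_symm O₃))
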